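/- arXiv:0901.4115 — 7 statements merged into one kernel-verified Lean document; each statement's English description precedes it below -/
import Mathlib

section
/- Let μ be a Borel probability measure on ℝ^n with finite support (spectral with finite spectrum Λ). Then μ is purely atomic and all atoms have equal measure 1/#Λ. -/
open MeasureTheory Complex ENNReal

/-- Fourier transform of a measure on `ℝⁿ`. -/
noncomputable def muHat {n : ℕ} (μ : Measure (Fin n → ℝ)) (t : Fin n → ℝ) : ℂ :=
  ∫ x, Complex.exp (2 * (Real.pi : ℂ) * Complex.I * ((∑ i, t i * x i : ℝ) : ℂ)) ∂μ

/-- `Λ` is a spectrum for `μ`: the exponentials `e_λ`, `λ ∈ Λ`, form an orthonormal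
basis of `L²(μ)`; equivalently `∑_{λ∈Λ} |μ̂(t-λ)|² = 1` for all `t`. -/
def IsSpectrum {n : ℕ} (μ : Measure (Fin n → ℝ)) (Λ : Set (Fin n → ℝ)) : Prop :=
  ∀ t : Fin n → ℝ, ∑' l : Λ, ((‖muHat μ (t - (l : Fin n → ℝ))‖₊ : ℝ≥0∞) ^ 2) = 1

noncomputable def ee {n : ℕ} (t x : Fin n → ℝ) : ℂ :=
  Complex.exp (2 * (Real.pi : ℂ) * Complex.I * ((∑ i, t i * x i : ℝ) : ℂ))

lemma norm_ee {n : ℕ} (t x : Fin n → ℝ) : ‖ee t x‖ = 1 := by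
  rw [ee, Complex.norm_exp]
  have : (2 * (Real.pi : ℂ) * Complex.I * ((∑ i, t i * x i : ℝ) : ℂ)).re = 0 := by
    simp [Complex.mul_re, Complex.mul_im]
  rw [this, Real.exp_zero]

lemma ee_add {n : ℕ} (s t x : Fin n → ℝ) : ee (s + t) x = ee s x * ee t x := by
  rw [ee, ee, ee, ← Complex.exp_add]
  congr 1
  push_cast [Pi.add_apply, add_mul, Finset.sum_add_distrib]
  ring

lemma ee_zero {n : ℕ} (x : Fin n → ℝ) : ee 0 x = 1 := by simp [ee]

lemma conj_ee {n : ℕ} (t x : Fin n → ℝ) : (starRingEnd ℂ) (ee t x) = ee (-t) x := by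
  rw [ee, ee, ← Complex.exp_conj]
  congr 1
  have h1 : ((∑ i, (-t) i * x i : ℝ) : ℂ) = -((∑ i, t i * x i : ℝ) : ℂ) := by
    push_cast [Pi.neg_apply, neg_mul]
    simp [Finset.sum_neg_distrib]
  rw [h1]
  simp only [map_mul, Complex.conj_I, Complex.conj_ofReal, map_ofNat]
  ring

lemma continuous_ee_t {n : ℕ} (x : Fin n → ℝ) : Continuous fun t : Fin n → ℝ => ee t x := by
  unfold ee; fun_prop

lemma continuous_ee_x {n : ℕ} (t : Fin n → ℝ) : Continuous fun x : Fin n → ℝ => ee t x := by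
  unfold ee; fun_prop

lemma integrable_ee {n : ℕ} (μ : Measure (Fin n → ℝ)) [IsFiniteMeasure μ] (t : Fin n → ℝ) :
    Integrable (fun x => ee t x) μ := by
  apply Integrable.mono' (integrable_const 1) (continuous_ee_x t).aestronglyMeasurable
  filter_upwards with x
  rw [norm_ee]

lemma muHat_eq {n : ℕ} (μ : Measure (Fin n → ℝ)) (t : Fin n → ℝ) :
    muHat μ t = ∫ x, ee t x ∂μ := rfl

lemma muHat_zero {n : ℕ} (μ : Measure (Fin n → ℝ)) [IsProbabilityMeasure μ] :
    muHat μ 0 = 1 := by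
  rw [muHat_eq]
  simp [ee_zero]

lemma int_ee_mul_conj {n : ℕ} (μ : Measure (Fin n → ℝ)) (s u : Fin n → ℝ) :
    ∫ x, ee s x * (starRingEnd ℂ) (ee u x) ∂μ = muHat μ (s - u) := by
  rw [muHat_eq]
  congr 1
  ext x
  rw [conj_ee, ← ee_add, sub_eq_add_neg]

lemma conj_muHat {n : ℕ} (μ : Measure (Fin n → ℝ)) (t : Fin n → ℝ) :
    (starRingEnd ℂ) (muHat μ t) = muHat μ (-t) := by
  rw [muHat_eq, muHat_eq, ← integral_conj]
  congr 1
  ext x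
  rw [conj_ee]

lemma muHat_ortho {n : ℕ} (μ : Measure (Fin n → ℝ)) [IsProbabilityMeasure μ]
    (Λ : Set (Fin n → ℝ)) (hΛ : IsSpectrum μ Λ) {l l' : Fin n → ℝ}
    (hl : l ∈ Λ) (hl' : l' ∈ Λ) (hne : l ≠ l') : muHat μ (l - l') = 0 := by
  have h := hΛ l
  rw [ENNReal.tsum_eq_add_tsum_ite (⟨l, hl⟩ : Λ)] at h
  have h1 : ((‖muHat μ (l - ((⟨l, hl⟩ : Λ) : Fin n → ℝ))‖₊ : ℝ≥0∞) ^ 2) = 1 := by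
    simp [sub_self, muHat_zero]
  rw [h1] at h
  have h2 : (∑' (l' : Λ), if l' = (⟨l, hl⟩ : Λ) then 0
      else ((‖muHat μ (l - (l' : Fin n → ℝ))‖₊ : ℝ≥0∞) ^ 2)) = 0 := by
    apply (ENNReal.add_right_inj (a := (1:ℝ≥0∞)) (by norm_num)).mp
    rw [add_zero]
    convert h using 3
    ext i
    congr 1
  rw [ENNReal.tsum_eq_zero] at h2
  have h3 := h2 ⟨l', hl'⟩
  rw [if_neg (by simp [hne.symm])] at h3
  have h4 : (‖muHat μ (l - l')‖₊ : ℝ≥0∞) ^ 2 = 0 := h3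
  have h5 : ‖muHat μ (l - l')‖₊ = 0 := by
    have := pow_eq_zero_iff (n := 2) (two_ne_zero) |>.mp h4
    exact_mod_cast this
  simpa using h5

lemma parseval_real {n : ℕ} (μ : Measure (Fin n → ℝ)) (Λ : Set (Fin n → ℝ)) [Fintype ↥Λ]
    (hΛ : IsSpectrum μ Λ) (t : Fin n → ℝ) :
    ∑ l : ↥Λ, Complex.normSq (muHat μ (t - (l : Fin n → ℝ))) = 1 := by
  have h := hΛ t
  rw [tsum_fintype] at h
  have h2 : ((∑ l : ↥Λ, (‖muHat μ (t - (l : Fin n → ℝ))‖₊ ^ 2) : NNReal) : ℝ≥0∞) = 1 := by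
    push_cast
    exact h
  rw [ENNReal.coe_eq_one] at h2
  have h3 := congrArg (fun q : NNReal => (q : ℝ)) h2
  push_cast at h3
  rw [← h3]
  apply Finset.sum_congr rfl
  intro l _
  rw [← Complex.sq_norm]

lemma ee_mul_conj {n : ℕ} (v w x : Fin n → ℝ) :
    ee v x * (starRingEnd ℂ) (ee w x) = ee (v - w) x := by
  rw [conj_ee, ← ee_add, sub_eq_add_neg]

lemma integrable_const_mul_ee {n : ℕ} (μ : Measure (Fin n → ℝ)) [IsFiniteMeasure μ]
    (c : ℂ) (v : Fin n → ℝ) : Integrable (fun x => c * ee v x) μ :=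
  (integrable_ee μ v).const_mul c

lemma key_ae {n : ℕ} (μ : Measure (Fin n → ℝ)) [IsProbabilityMeasure μ]
    (Λ : Set (Fin n → ℝ)) [Fintype ↥Λ] (hΛ : IsSpectrum μ Λ) (t : Fin n → ℝ) :
    ∀ᵐ x ∂μ, ee t x = ∑ l : ↥Λ, muHat μ (t - (l : Fin n → ℝ)) * ee (l : Fin n → ℝ) x := by
  classical
  set c : ↥Λ → ℂ := fun l => muHat μ (t - (l : Fin n → ℝ)) with hc
  set g : (Fin n → ℝ) → ℂ := fun x => ee t x - ∑ l : ↥Λ, c l * ee (l : Fin n → ℝ) x with hgdef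
  have expand : ∀ (a b : ℂ), (a - b) * (starRingEnd ℂ) (a - b)
      = a * (starRingEnd ℂ) a - a * (starRingEnd ℂ) b - b * (starRingEnd ℂ) a
        + b * (starRingEnd ℂ) b := by
    intro a b; rw [map_sub]; ring
  have hJfun : (fun x => g x * (starRingEnd ℂ) (g x)) =
      (fun x => 1 - (∑ l : ↥Λ, (starRingEnd ℂ) (c l) * ee (t - (l : Fin n → ℝ)) x)
        - (∑ l : ↥Λ, c l * ee ((l : Fin n → ℝ) - t) x)
        + ∑ l : ↥Λ, ∑ l' : ↥Λ, (c l * (starRingEnd ℂ) (c l'))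
            * ee ((l : Fin n → ℝ) - (l' : Fin n → ℝ)) x) := by
    funext x
    rw [hgdef]
    simp only []
    rw [expand]
    congr 1
    · congr 1
      · congr 1
        · rw [ee_mul_conj]; simp [ee_zero]
        · rw [map_sum, Finset.mul_sum]
          apply Finset.sum_congr rfl
          intro l _
          rw [map_mul]
          rw [show ee t x * ((starRingEnd ℂ) (c l) * (starRingEnd ℂ) (ee (l : Fin n → ℝ) x))
              = (starRingEnd ℂ) (c l) * (ee t x * (starRingEnd ℂ) (ee (l : Fin n → ℝ) x)) by ring]
          rw [ee_mul_conj]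
      · rw [Finset.sum_mul]
        apply Finset.sum_congr rfl
        intro l _
        rw [mul_assoc, ee_mul_conj]
    · rw [map_sum, Finset.sum_mul]
      apply Finset.sum_congr rfl
      intro l _
      rw [Finset.mul_sum]
      apply Finset.sum_congr rfl
      intro l' _
      rw [map_mul]
      rw [show c l * ee (l : Fin n → ℝ) x * ((starRingEnd ℂ) (c l') * (starRingEnd ℂ) (ee (l' : Fin n → ℝ) x))
          = (c l * (starRingEnd ℂ) (c l')) * (ee (l : Fin n → ℝ) x * (starRingEnd ℂ) (ee (l' : Fin n → ℝ) x)) by ring]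
      rw [ee_mul_conj]
  -- compute the integral of the RHS
  have hint2 : Integrable (fun x => ∑ l : ↥Λ, (starRingEnd ℂ) (c l) * ee (t - (l : Fin n → ℝ)) x) μ :=
    integrable_finset_sum _ (fun l _ => integrable_const_mul_ee μ _ _)
  have hint3 : Integrable (fun x => ∑ l : ↥Λ, c l * ee ((l : Fin n → ℝ) - t) x) μ :=
    integrable_finset_sum _ (fun l _ => integrable_const_mul_ee μ _ _)
  have hint4 : Integrable (fun x => ∑ l : ↥Λ, ∑ l' : ↥Λ,
      (c l * (starRingEnd ℂ) (c l')) * ee ((l : Fin n → ℝ) - (l' : Fin n → ℝ)) x) μ :=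
    integrable_finset_sum _ (fun l _ => integrable_finset_sum _ (fun l' _ => integrable_const_mul_ee μ _ _))
  have hI2 : (∫ x, ∑ l : ↥Λ, (starRingEnd ℂ) (c l) * ee (t - (l : Fin n → ℝ)) x ∂μ)
      = ∑ l : ↥Λ, (starRingEnd ℂ) (c l) * c l := by
    rw [integral_finset_sum _ (fun l _ => integrable_const_mul_ee μ _ _)]
    apply Finset.sum_congr rfl
    intro l _
    rw [integral_const_mul, ← muHat_eq]
  have hI3 : (∫ x, ∑ l : ↥Λ, c l * ee ((l : Fin n → ℝ) - t) x ∂μ)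
      = ∑ l : ↥Λ, c l * (starRingEnd ℂ) (c l) := by
    rw [integral_finset_sum _ (fun l _ => integrable_const_mul_ee μ _ _)]
    apply Finset.sum_congr rfl
    intro l _
    rw [integral_const_mul, ← muHat_eq]
    congr 1
    rw [hc, conj_muHat, neg_sub]
  have hI4 : (∫ x, ∑ l : ↥Λ, ∑ l' : ↥Λ,
      (c l * (starRingEnd ℂ) (c l')) * ee ((l : Fin n → ℝ) - (l' : Fin n → ℝ)) x ∂μ)
      = ∑ l : ↥Λ, c l * (starRingEnd ℂ) (c l) := by
    rw [integral_finset_sum _ (fun l _ => integrable_finset_sum _ (fun l' _ => integrable_const_mul_ee μ _ _))]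
    apply Finset.sum_congr rfl
    intro l _
    rw [integral_finset_sum _ (fun l' _ => integrable_const_mul_ee μ _ _)]
    rw [Finset.sum_eq_single l]
    · rw [integral_const_mul, ← muHat_eq]
      simp [sub_self, muHat_zero]
    · intro l' _ hne
      rw [integral_const_mul, ← muHat_eq]
      rw [muHat_ortho μ Λ hΛ l.2 l'.2 (by simpa [Subtype.ext_iff] using hne.symm)]
      ring
    · intro habs
      exact absurd (Finset.mem_univ l) habs
  have hs : (∑ l : ↥Λ, c l * (starRingEnd ℂ) (c l)) = 1 := by
    have := parseval_real μ Λ hΛ t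
    calc (∑ l : ↥Λ, c l * (starRingEnd ℂ) (c l))
        = ∑ l : ↥Λ, ((Complex.normSq (c l) : ℝ) : ℂ) := by
          apply Finset.sum_congr rfl
          intro l _
          rw [Complex.mul_conj]
      _ = (((∑ l : ↥Λ, Complex.normSq (c l) : ℝ)) : ℂ) := by push_cast; ring
      _ = 1 := by rw [this]; norm_num
  have hconjs : (∑ l : ↥Λ, (starRingEnd ℂ) (c l) * c l) = 1 := by
    rw [← hs]
    apply Finset.sum_congr rfl
    intro l _
    ring
  have hint12 : Integrable (fun x => (1:ℂ) - ∑ l : ↥Λ, (starRingEnd ℂ) (c l) * ee (t - (l : Fin n → ℝ)) x) μ :=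
    (integrable_const 1).sub hint2
  have hint123 : Integrable (fun x => (1:ℂ) - (∑ l : ↥Λ, (starRingEnd ℂ) (c l) * ee (t - (l : Fin n → ℝ)) x)
      - ∑ l : ↥Λ, c l * ee ((l : Fin n → ℝ) - t) x) μ := hint12.sub hint3
  have hJ : (∫ x, g x * (starRingEnd ℂ) (g x) ∂μ) = 0 := by
    rw [hJfun]
    rw [integral_add hint123 hint4, integral_sub hint12 hint3,
        integral_sub (integrable_const 1) hint2]
    rw [hI2, hI3, hI4, hconjs, hs]
    simp
  -- conclude g = 0 a.e.
  have hgequiv : (fun x => g x * (starRingEnd ℂ) (g x)) = fun x => ((Complex.normSq (g x) : ℝ) : ℂ) := by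
    funext x
    rw [Complex.mul_conj]
  rw [hgequiv] at hJ
  have hJre : (∫ x, Complex.normSq (g x) ∂μ) = 0 := by
    have h2 : ∫ x, ((Complex.normSq (g x) : ℝ) : ℂ) ∂μ
        = ((∫ x, Complex.normSq (g x) ∂μ : ℝ) : ℂ) := integral_ofReal
    rw [h2] at hJ
    exact_mod_cast hJ
  have hgcont : Continuous g := by
    rw [hgdef]
    exact (continuous_ee_x t).sub (continuous_finset_sum _ (fun l _ => (continuous_const.mul (continuous_ee_x _))))
  have hgbdd : ∀ x, ‖g x‖ ≤ 1 + ∑ l : ↥Λ, ‖c l‖ := by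
    intro x
    rw [hgdef]
    refine le_trans (norm_sub_le _ _) ?_
    gcongr
    · rw [norm_ee]
    · refine le_trans (norm_sum_le _ _) ?_
      apply Finset.sum_le_sum
      intro l _
      rw [norm_mul, norm_ee, mul_one]
  have hnsint : Integrable (fun x => Complex.normSq (g x)) μ := by
    apply Integrable.mono' (integrable_const ((1 + ∑ l : ↥Λ, ‖c l‖) ^ 2))
      (Complex.continuous_normSq.comp hgcont).aestronglyMeasurable
    filter_upwards with x
    simp only [Function.comp_apply, Real.norm_eq_abs,
      _root_.abs_of_nonneg (Complex.normSq_nonneg _)]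
    rw [Complex.normSq_eq_norm_sq]
    exact pow_le_pow_left₀ (norm_nonneg _) (hgbdd x) 2
  have hae : (fun x => Complex.normSq (g x)) =ᵐ[μ] 0 := by
    rw [← integral_eq_zero_iff_of_nonneg (fun x => Complex.normSq_nonneg _) hnsint]
    exact hJre
  filter_upwards [hae] with x hx
  have : Complex.normSq (g x) = 0 := hx
  have hg0 : g x = 0 := by
    exact Complex.normSq_eq_zero.mp this
  rw [hgdef] at hg0
  simpa [sub_eq_zero] using hg0

lemma continuous_muHat {n : ℕ} (μ : Measure (Fin n → ℝ)) [IsFiniteMeasure μ] :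
    Continuous (muHat μ) := by
  have : (muHat μ) = fun t => ∫ x, ee t x ∂μ := rfl
  rw [this]
  apply continuous_of_dominated (bound := fun _ => 1)
  · exact fun t => (continuous_ee_x t).aestronglyMeasurable
  · intro t
    filter_upwards with x
    rw [norm_ee]
  · exact integrable_const 1
  · filter_upwards with x
    exact continuous_ee_t x

lemma good_set {n : ℕ} (μ : Measure (Fin n → ℝ)) [IsProbabilityMeasure μ]
    (Λ : Set (Fin n → ℝ)) [Fintype ↥Λ] (hΛ : IsSpectrum μ Λ) :
    ∀ᵐ x ∂μ, ∀ t : Fin n → ℝ,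
      ee t x = ∑ l : ↥Λ, muHat μ (t - (l : Fin n → ℝ)) * ee (l : Fin n → ℝ) x := by
  obtain ⟨D, hDc, hDd⟩ := TopologicalSpace.exists_countable_dense (Fin n → ℝ)
  have hae : ∀ᵐ x ∂μ, ∀ t ∈ D,
      ee t x = ∑ l : ↥Λ, muHat μ (t - (l : Fin n → ℝ)) * ee (l : Fin n → ℝ) x :=
    (ae_ball_iff hDc).mpr (fun t _ => key_ae μ Λ hΛ t)
  filter_upwards [hae] with x hx
  have hcont1 : Continuous fun t => ee t x := continuous_ee_t x
  have hcont2 : Continuous fun t =>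
      ∑ l : ↥Λ, muHat μ (t - (l : Fin n → ℝ)) * ee (l : Fin n → ℝ) x := by
    apply continuous_finset_sum
    intro l _
    exact (((continuous_muHat μ).comp (continuous_sub_right _)).mul continuous_const)
  exact fun t => congrFun (Continuous.ext_on hDd hcont1 hcont2 hx) t

noncomputable def charHom {n : ℕ} (x : Fin n → ℝ) : Multiplicative (Fin n → ℝ) →* ℂ where
  toFun t := ee (Multiplicative.toAdd t) x
  map_one' := by simpa using ee_zero x
  map_mul' s t := ee_add (Multiplicative.toAdd s) (Multiplicative.toAdd t) x

lemma two_pi_I_ne : (2 * (Real.pi : ℂ) * Complex.I) ≠ 0 := by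
  simp [Real.pi_ne_zero, Complex.I_ne_zero]

lemma exp_coord_eq {n : ℕ} {x y : Fin n → ℝ} (h : ∀ t : Fin n → ℝ, ee t x = ee t y)
    (i : Fin n) : x i = y i := by
  by_contra hne
  set d := x i - y i with hd
  have hdne : d ≠ 0 := sub_ne_zero.mpr hne
  set r : ℝ := 1 / (2 * d) with hr
  have ht := h (fun j => if j = i then r else 0)
  rw [ee, ee] at ht
  have hsum : ∀ z : Fin n → ℝ, (∑ j, (if j = i then r else 0) * z j) = r * z i := by
    intro z
    rw [Finset.sum_eq_single i]
    · simp
    · intro j _ hj; simp [hj]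
    · intro habs; exact absurd (Finset.mem_univ i) habs
  rw [hsum x, hsum y] at ht
  rw [Complex.exp_eq_exp_iff_exists_int] at ht
  obtain ⟨k, hk⟩ := ht
  have hk2 : ((r * x i : ℝ) : ℂ) = ((r * y i : ℝ) : ℂ) + k := by
    have h2 : (2 * (Real.pi : ℂ) * Complex.I) * ((r * x i : ℝ) : ℂ)
        = (2 * (Real.pi : ℂ) * Complex.I) * (((r * y i : ℝ) : ℂ) + k) := by
      rw [hk]; ring
    exact mul_left_cancel₀ two_pi_I_ne h2
  have hk3 : r * x i = r * y i + k := by exact_mod_cast hk2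
  have hk4 : r * d = k := by rw [hd]; ring_nf; ring_nf at hk3; linarith
  rw [hr] at hk4
  have hk5 : d * 1 = d * (2 * (k:ℝ)) := by
    field_simp at hk4
    linear_combination d * hk4
  have hk6 : (1:ℝ) = 2 * (k:ℝ) := mul_left_cancel₀ hdne hk5
  have h2k : (2 * k : ℤ) = 1 := by exact_mod_cast hk6.symm
  omega

lemma charHom_injective {n : ℕ} : Function.Injective (charHom (n := n)) := by
  intro x y h
  have h' : ∀ t : Fin n → ℝ, ee t x = ee t y := by
    intro t
    exact DFunLike.congr_fun h (Multiplicative.ofAdd t)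
  funext i
  exact exp_coord_eq h' i

lemma good_set_finite {n : ℕ} (μ : Measure (Fin n → ℝ)) (Λ : Set (Fin n → ℝ)) [Fintype ↥Λ]
    (S : Set (Fin n → ℝ))
    (hS : ∀ x ∈ S, ∀ t : Fin n → ℝ,
      ee t x = ∑ l : ↥Λ, muHat μ (t - (l : Fin n → ℝ)) * ee (l : Fin n → ℝ) x) :
    S.Finite ∧ Nat.card ↥S ≤ Fintype.card ↥Λ := by
  classical
  set g : ↥Λ → ((Fin n → ℝ) → ℂ) := fun l => (fun t => muHat μ (t - (l : Fin n → ℝ))) with hg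
  set W := Submodule.span ℂ (Set.range g) with hW
  haveI : Module.Finite ℂ W := Module.Finite.span_of_finite ℂ (Set.finite_range g)
  set φ : ↥S → ((Fin n → ℝ) → ℂ) := fun x => (fun t => ee t (x : Fin n → ℝ)) with hφ
  have hmem : ∀ x : ↥S, φ x ∈ W := by
    intro x
    have hx := hS x x.2
    have : φ x = ∑ l : ↥Λ, ee (l : Fin n → ℝ) (x : Fin n → ℝ) • g l := by
      funext t
      rw [hφ]
      simp only [Finset.sum_apply, Pi.smul_apply, smul_eq_mul, hg]
      rw [hx t]
      apply Finset.sum_congr rfl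
      intro l _
      ring
    rw [this]
    exact Submodule.sum_mem _ (fun l _ => Submodule.smul_mem _ _
      (Submodule.subset_span (Set.mem_range_self l)))
  have hli : LinearIndependent ℂ φ := by
    have h1 : LinearIndependent ℂ (fun f : (Multiplicative (Fin n → ℝ)) →* ℂ => (f : Multiplicative (Fin n → ℝ) → ℂ)) :=
      linearIndependent_monoidHom (Multiplicative (Fin n → ℝ)) ℂ
    have h2 := h1.comp (fun x : ↥S => charHom (x : Fin n → ℝ))
      (charHom_injective.comp Subtype.val_injective)
    exact h2
  set ψ : ↥S → ↥W := fun x => ⟨φ x, hmem x⟩ with hψ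
  have hliψ : LinearIndependent ℂ ψ := by
    apply LinearIndependent.of_comp W.subtype
    exact hli
  haveI hfinS : Finite ↥S := hliψ.finite
  have hSfin : S.Finite := Set.finite_coe_iff.mp hfinS
  haveI : Fintype ↥S := hSfin.fintype
  refine ⟨hSfin, ?_⟩
  rw [Nat.card_eq_fintype_card]
  calc Fintype.card ↥S ≤ Module.finrank ℂ W := hliψ.fintype_card_le_finrank
    _ ≤ Fintype.card ↥Λ := finrank_range_le_card g

lemma measure_eq_sum_dirac {n : ℕ} (μ : Measure (Fin n → ℝ)) (A : Finset (Fin n → ℝ))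
    (h : μ ((A : Set (Fin n → ℝ)))ᶜ = 0) :
    μ = ∑ a ∈ A, μ {a} • Measure.dirac a := by
  classical
  ext s hs
  have hA : MeasurableSet (A : Set (Fin n → ℝ)) := A.finite_toSet.measurableSet
  have h1 : μ s = μ (s ∩ (A : Set (Fin n → ℝ))) := by
    rw [← measure_inter_add_diff s hA]
    have h0 : μ (s \ (A : Set (Fin n → ℝ))) = 0 :=
      measure_mono_null (fun z hz => hz.2) h
    rw [h0, add_zero]
  have h2 : s ∩ (A : Set (Fin n → ℝ)) = ⋃ a ∈ A.filter (· ∈ s), ({a} : Set (Fin n → ℝ)) := by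
    ext z
    simp only [Set.mem_inter_iff, Set.mem_iUnion, Finset.mem_filter, Set.mem_singleton_iff,
      Finset.mem_coe]
    constructor
    · rintro ⟨hzs, hzA⟩; exact ⟨z, ⟨hzA, hzs⟩, rfl⟩
    · rintro ⟨a, ⟨haA, has⟩, rfl⟩; exact ⟨has, haA⟩
  have h3 : μ (s ∩ (A : Set (Fin n → ℝ))) = ∑ a ∈ A.filter (· ∈ s), μ {a} := by
    rw [h2, measure_biUnion_finset]
    · intro a _ b _ hab
      simp [Function.onFun, Set.disjoint_singleton, hab]
    · intro a _
      exact measurableSet_singleton a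
  rw [h1, h3]
  have h4 : (∑ a ∈ A, μ {a} • Measure.dirac a) s = ∑ a ∈ A, μ {a} * Measure.dirac a s := by
    rw [Measure.finset_sum_apply]
    apply Finset.sum_congr rfl
    intro a _
    rw [Measure.smul_apply, smul_eq_mul]
  rw [h4]
  rw [Finset.sum_filter]
  apply Finset.sum_congr rfl
  intro a _
  rw [Measure.dirac_apply' a hs, Set.indicator_apply]
  by_cases has : a ∈ s <;> simp [has]

theorem stmt1 {n : ℕ} (μ : Measure (Fin n → ℝ)) [IsProbabilityMeasure μ]
    (Λ : Set (Fin n → ℝ)) (hΛ : IsSpectrum μ Λ) (hfin : Λ.Finite) :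
    ∃ A : Finset (Fin n → ℝ), A.card = Λ.ncard ∧
      μ = (Λ.ncard : ℝ≥0∞)⁻¹ • ∑ a ∈ A, Measure.dirac a := by
  classical
  haveI := hfin.fintype
  set N := Fintype.card ↥Λ with hNdef
  have hN : Λ.ncard = N := by rw [← Nat.card_coe_set_eq, Nat.card_eq_fintype_card]
  set S := {x : Fin n → ℝ | ∀ t : Fin n → ℝ,
      ee t x = ∑ l : ↥Λ, muHat μ (t - (l : Fin n → ℝ)) * ee (l : Fin n → ℝ) x} with hSdef
  have hSc : μ Sᶜ = 0 := by
    have hgs := good_set μ Λ hΛ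
    rw [MeasureTheory.ae_iff] at hgs
    convert hgs using 2
    rfl
  obtain ⟨hSfin, hScard⟩ := good_set_finite μ Λ S (fun x hx => hx)
  set A := hSfin.toFinset with hAdef
  have hAS : (A : Set (Fin n → ℝ)) = S := hSfin.coe_toFinset
  have hrep : μ = ∑ a ∈ A, μ {a} • Measure.dirac a :=
    measure_eq_sum_dirac μ A (by rw [hAS]; exact hSc)
  set p : (Fin n → ℝ) → ℝ≥0∞ := fun a => μ {a} with hpdef
  have hpfin : ∀ a, p a ≠ ∞ := fun a => (measure_lt_top μ _).ne
  set q : (Fin n → ℝ) → ℝ := fun a => (p a).toReal with hqdef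
  have hq0 : ∀ a, 0 ≤ q a := fun a => ENNReal.toReal_nonneg
  have hsump : ∑ a ∈ A, p a = 1 := by
    have h1 : μ Set.univ = 1 := measure_univ
    rw [hrep] at h1
    rw [Measure.finset_sum_apply] at h1
    rw [← h1]
    apply Finset.sum_congr rfl
    intro a _
    rw [Measure.smul_apply, smul_eq_mul, Measure.dirac_apply_of_mem (Set.mem_univ a), mul_one]
  have hsumq : ∑ a ∈ A, q a = 1 := by
    have := congrArg ENNReal.toReal hsump
    rw [ENNReal.toReal_sum (fun a _ => hpfin a)] at this
    simpa using this
  -- Fourier transform of the atomic measure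
  have hmuHat : ∀ t, muHat μ t = ∑ a ∈ A, (q a : ℂ) * ee t a := by
    intro t
    rw [muHat_eq]
    conv_lhs => rw [hrep]
    rw [integral_finset_sum_measure (fun a _ => ((integrable_ee (Measure.dirac a) t).smul_measure (hpfin a)))]
    apply Finset.sum_congr rfl
    intro a _
    rw [integral_smul_measure, integral_dirac]
    simp [hqdef, smul_eq_mul]
  -- orthonormal family in EuclideanSpace
  set u : ↥Λ → EuclideanSpace ℂ ↥A :=
    fun l => WithLp.toLp 2 (fun a : ↥A => ((Real.sqrt (q (a : Fin n → ℝ)) : ℝ) : ℂ) * ee (l : Fin n → ℝ) (a : Fin n → ℝ)) with hudef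
  have hinner : ∀ l l' : ↥Λ,
      (inner ℂ (u l) (u l') : ℂ) = muHat μ ((l' : Fin n → ℝ) - (l : Fin n → ℝ)) := by
    intro l l'
    rw [PiLp.inner_apply, hmuHat]
    rw [← Finset.sum_coe_sort A (fun a => (q a : ℂ) * ee ((l' : Fin n → ℝ) - (l : Fin n → ℝ)) a)]
    apply Finset.sum_congr rfl
    intro a _
    rw [RCLike.inner_apply, hudef]
    simp only [map_mul, Complex.conj_ofReal]
    rw [conj_ee]
    have h1 : ee ((l' : Fin n → ℝ) - (l : Fin n → ℝ)) (a : Fin n → ℝ)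
        = ee (-(l : Fin n → ℝ)) (a : Fin n → ℝ) * ee (l' : Fin n → ℝ) (a : Fin n → ℝ) := by
      rw [← ee_add, sub_eq_add_neg, add_comm]
    rw [h1]
    have h2 : ((Real.sqrt (q (a : Fin n → ℝ)) : ℝ) : ℂ) * ((Real.sqrt (q (a : Fin n → ℝ)) : ℝ) : ℂ)
        = ((q (a : Fin n → ℝ) : ℝ) : ℂ) := by
      rw [← Complex.ofReal_mul, Real.mul_self_sqrt (hq0 _)]
    ring_nf
    rw [← h2]
    ring
  have honb : Orthonormal ℂ u := by
    rw [orthonormal_iff_ite]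
    intro l l'
    rw [hinner]
    by_cases h : l = l'
    · subst h
      simp [sub_self, muHat_zero]
    · rw [if_neg h]
      exact muHat_ortho μ Λ hΛ l'.2 l.2 (fun hc => h (Subtype.ext hc.symm))
  have hcard1 : N ≤ A.card := by
    have h1 := honb.linearIndependent.fintype_card_le_finrank
    rwa [finrank_euclideanSpace, Fintype.card_coe] at h1
  have hcard2 : A.card ≤ N := by
    have h1 : A.card = Nat.card ↥S := by
      rw [Nat.card_coe_set_eq, ← hAS, Set.ncard_coe_finset]
    rw [h1]
    exact hScard
  have hcardA : A.card = N := le_antisymm hcard2 hcard1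
  have hN0 : 0 < N := by
    rcases Nat.eq_zero_or_pos N with h0 | h
    · exfalso
      have hAemp : A = ∅ := Finset.card_eq_zero.mp (by rw [hcardA, h0])
      rw [hAemp] at hsumq
      simp at hsumq
    · exact h
  haveI : Nonempty ↥Λ := by
    rw [← Fintype.card_pos_iff]
    exact hN0
  -- Parseval for the standard basis vectors: every atom has mass 1/N
  have hspan : ⊤ ≤ Submodule.span ℂ (Set.range u) :=
    ge_of_eq (honb.linearIndependent.span_eq_top_of_card_eq_finrank
      (by rw [finrank_euclideanSpace, Fintype.card_coe, hcardA]))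
  set b := OrthonormalBasis.mk honb hspan with hbdef
  have hq_eq : ∀ a : ↥A, (N : ℂ) * (q (a : Fin n → ℝ) : ℂ) = 1 := by
    intro a
    have hP := b.sum_inner_mul_inner (EuclideanSpace.single a 1) (EuclideanSpace.single a 1)
    have hP2 : ∀ l : ↥Λ, (inner ℂ (EuclideanSpace.single a (1:ℂ)) (b l) : ℂ)
        * (inner ℂ (b l) (EuclideanSpace.single a (1:ℂ)) : ℂ) = (q (a : Fin n → ℝ) : ℂ) := by
      intro l
      rw [hbdef, OrthonormalBasis.coe_mk]
      rw [EuclideanSpace.inner_single_left, EuclideanSpace.inner_single_right, map_one, one_mul,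
        one_mul]
      show u l a * (starRingEnd ℂ) (u l a) = ((q ((a : { x // x ∈ A }) : Fin n → ℝ) : ℝ) : ℂ)
      rw [Complex.mul_conj]
      rw [hudef]
      simp only [Complex.normSq_mul, Complex.normSq_ofReal]
      rw [Real.mul_self_sqrt (hq0 _)]
      have hns : Complex.normSq (ee (l : Fin n → ℝ) (a : Fin n → ℝ)) = 1 := by
        rw [Complex.normSq_eq_norm_sq, norm_ee]
        norm_num
      rw [hns, mul_one]
    rw [Finset.sum_congr rfl (fun l _ => hP2 l)] at hP
    rw [Finset.sum_const, Finset.card_univ] at hP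
    rw [EuclideanSpace.inner_single_left] at hP
    simp only [EuclideanSpace.single_apply, if_pos rfl, map_one, one_mul] at hP
    rw [← hNdef] at hP
    rw [nsmul_eq_mul] at hP
    exact hP
  have hqval : ∀ a ∈ A, q a = 1 / N := by
    intro a ha
    have := hq_eq ⟨a, ha⟩
    have hNC : (N : ℂ) ≠ 0 := by exact_mod_cast Nat.cast_ne_zero.mpr hN0.ne'
    have h' : (N : ℝ) * q a = 1 := by exact_mod_cast this
    field_simp
    linarith
  refine ⟨A, by rw [hcardA, hN], ?_⟩
  rw [hrep, hN, Finset.smul_sum]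
  apply Finset.sum_congr rfl
  intro a ha
  congr 1
  have hthis : p a = ENNReal.ofReal (q a) := (ENNReal.ofReal_toReal (hpfin a)).symm
  show p a = _
  rw [hthis, hqval a ha, one_div, ENNReal.ofReal_inv_of_pos (by exact_mod_cast hN0 : (0:ℝ) < (N:ℝ))]
  congr 1
  simp
end

section
/- Let μ be a Borel probability measure on ℝ^n and Λ ⊆ ℝ^n. The family E(Λ) = {e_λ : λ ∈ Λ} is orthonormal in L²(μ) if and only if the function h_Λ(t) = Σ_{λ∈Λ} |μ̂(t−λ)|² satisfies h_Λ(t) ≤ 1 for all t ∈ ℝ^n. -/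
open MeasureTheory Complex ENNReal

namespace Aux

variable {n : ℕ} (μ : Measure (Fin n → ℝ)) [IsProbabilityMeasure μ]

noncomputable def eFun (t : Fin n → ℝ) (x : Fin n → ℝ) : ℂ :=
  Complex.exp (2 * (Real.pi : ℂ) * Complex.I * ((∑ i, t i * x i : ℝ) : ℂ))

lemma eFun_memLp (t : Fin n → ℝ) : MemLp (eFun t) 2 μ := by
  refine MemLp.of_bound ?_ 1 (Filter.Eventually.of_forall fun x => ?_)
  · apply Continuous.aestronglyMeasurable
    apply Continuous.cexp
    exact continuous_const.mul (continuous_ofReal.comp (by continuity))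
  · rw [eFun, Complex.norm_exp]
    simp [mul_comm, mul_assoc, Complex.mul_I_re]

noncomputable def eLp (t : Fin n → ℝ) : Lp ℂ 2 μ := (eFun_memLp μ t).toLp _

lemma inner_eLp (l t : Fin n → ℝ) :
    (inner ℂ (eLp μ l) (eLp μ t) : ℂ) = muHat μ (t - l) := by
  rw [MeasureTheory.L2.inner_def]
  have h1 : ∀ᵐ a ∂μ, (eLp μ l) a = eFun l a := (eFun_memLp μ l).coeFn_toLp
  have h2 : ∀ᵐ a ∂μ, (eLp μ t) a = eFun t a := (eFun_memLp μ t).coeFn_toLp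
  have : ∫ a, (inner ℂ ((eLp μ l) a) ((eLp μ t) a) : ℂ) ∂μ
      = ∫ a, (starRingEnd ℂ) (eFun l a) * eFun t a ∂μ := by
    refine integral_congr_ae ?_
    filter_upwards [h1, h2] with a ha hb
    rw [ha, hb, RCLike.inner_apply, mul_comm]
  rw [this, muHat]
  refine integral_congr_ae (Filter.Eventually.of_forall fun x => ?_)
  simp only [eFun]
  rw [← Complex.exp_conj, ← Complex.exp_add]
  congr 1
  simp only [map_mul, Complex.conj_I, Complex.conj_ofReal, map_ofNat, Pi.sub_apply]
  push_cast [sub_mul, Finset.sum_sub_distrib]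
  ring

lemma muHat_zero : muHat μ 0 = 1 := by
  simp [muHat]

lemma norm_eLp (t : Fin n → ℝ) : ‖eLp μ t‖ = 1 := by
  have h : (inner ℂ (eLp μ t) (eLp μ t) : ℂ) = 1 := by
    rw [inner_eLp, sub_self, muHat_zero]
  have h2 : ‖eLp μ t‖ ^ 2 = 1 := by
    rw [← @inner_self_eq_norm_sq ℂ, h]; simp
  nlinarith [norm_nonneg (eLp μ t)]

lemma orthonormal_eLp (Λ : Set (Fin n → ℝ))
    (h : ∀ l ∈ Λ, ∀ l' ∈ Λ, l ≠ l' → muHat μ (l - l') = 0) :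
    Orthonormal ℂ (fun l : Λ => eLp μ (l : Fin n → ℝ)) := by
  rw [orthonormal_iff_ite]
  intro i j
  by_cases hij : i = j
  · subst hij
    simp [inner_eLp, sub_self, muHat_zero, norm_eLp]
  · rw [if_neg hij, inner_eLp]
    exact h _ j.2 _ i.2 (fun hc => hij (Subtype.ext hc.symm))

end Aux
theorem stmt2 {n : ℕ} (μ : Measure (Fin n → ℝ)) [IsProbabilityMeasure μ]
    (Λ : Set (Fin n → ℝ)) :
    (∀ l ∈ Λ, ∀ l' ∈ Λ, l ≠ l' → muHat μ (l - l') = 0) ↔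
      (∀ t : Fin n → ℝ,
        ∑' l : Λ, ((‖muHat μ (t - (l : Fin n → ℝ))‖₊ : ℝ≥0∞) ^ 2) ≤ 1) := by
  constructor
  · intro h t
    have hon := Aux.orthonormal_eLp μ Λ h
    rw [ENNReal.tsum_eq_iSup_sum]
    refine iSup_le fun s => ?_
    have hb := hon.sum_inner_products_le (s := s) (Aux.eLp μ t)
    rw [Aux.norm_eLp] at hb
    simp only [Aux.inner_eLp] at hb
    have hc : ∑ i ∈ s, ((‖muHat μ (t - (i : Fin n → ℝ))‖₊ : ℝ≥0∞) ^ 2)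
        = (↑(∑ i ∈ s, ‖muHat μ (t - (i : Fin n → ℝ))‖₊ ^ 2) : ℝ≥0∞) := by
      rw [ENNReal.coe_finset_sum]
      exact Finset.sum_congr rfl fun i _ => by rw [ENNReal.coe_pow]
    rw [hc, ← ENNReal.coe_one, ENNReal.coe_le_coe, ← NNReal.coe_le_coe]
    push_cast
    simpa using hb
  · intro h l hl l' hl' hne
    have hle := (ENNReal.sum_le_tsum (f := fun i : Λ =>
      ((‖muHat μ (l - (i : Fin n → ℝ))‖₊ : ℝ≥0∞) ^ 2))
      ({⟨l, hl⟩, ⟨l', hl'⟩} : Finset Λ)).trans (h l)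
    have hne' : (⟨l, hl⟩ : Λ) ≠ ⟨l', hl'⟩ := fun hc => hne (congrArg Subtype.val hc)
    rw [Finset.sum_pair hne'] at hle
    simp only [sub_self, Aux.muHat_zero] at hle
    norm_num at hle
    have h0 : ((‖muHat μ (l - l')‖₊ : ℝ≥0∞) ^ 2) ≤ 0 := by
      refine ENNReal.le_of_add_le_add_left (a := 1) ENNReal.one_ne_top ?_
      simpa using hle
    simpa using h0
end

section
/- Let μ be a Borel probability measure on ℝ^n and Λ ⊆ ℝ^n such that E(Λ) = {e_λ : λ ∈ Λ} is orthonormal in L²(μ). Then E(Λ) is a maximal orthogonal family of exponentials if and only if 0 < h_Λ(t) ≤ 1 for all t ∈ ℝ^n, where h_Λ(t) = Σ_{λ∈Λ} |μ̂(t−λ)|². -/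
open MeasureTheory Complex ENNReal

noncomputable def eFun {n : ℕ} (t : Fin n → ℝ) : (Fin n → ℝ) → ℂ :=
  fun x => Complex.exp (2 * (Real.pi : ℂ) * Complex.I * ((∑ i, t i * x i : ℝ) : ℂ))

lemma eFun_norm {n : ℕ} (t x : Fin n → ℝ) : ‖eFun t x‖ = 1 := by
  simp [eFun, Complex.norm_exp, Complex.mul_re, Complex.mul_im]

lemma eFun_continuous {n : ℕ} (t : Fin n → ℝ) : Continuous (eFun t) := by
  unfold eFun; fun_prop

lemma eFun_memLp {n : ℕ} (μ : Measure (Fin n → ℝ)) [IsProbabilityMeasure μ] (t : Fin n → ℝ) :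
    MemLp (eFun t) 2 μ :=
  MemLp.of_bound (eFun_continuous t).aestronglyMeasurable 1
    (Filter.Eventually.of_forall fun x => (eFun_norm t x).le)

lemma eFun_conj_mul {n : ℕ} (l t x : Fin n → ℝ) :
    (starRingEnd ℂ) (eFun l x) * eFun t x = eFun (t - l) x := by
  simp only [eFun, ← Complex.exp_conj, ← Complex.exp_add, map_mul, Complex.conj_I,
    Complex.conj_ofReal, map_ofNat]
  congr 1
  push_cast [Finset.sum_sub_distrib, sub_mul, Pi.sub_apply]
  ring

noncomputable def eL {n : ℕ} (μ : Measure (Fin n → ℝ)) [IsProbabilityMeasure μ]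
    (t : Fin n → ℝ) : Lp ℂ 2 μ :=
  (eFun_memLp μ t).toLp (eFun t)

lemma inner_eL {n : ℕ} (μ : Measure (Fin n → ℝ)) [IsProbabilityMeasure μ] (l t : Fin n → ℝ) :
    @inner ℂ _ _ (eL μ l) (eL μ t) = muHat μ (t - l) := by
  rw [MeasureTheory.L2.inner_def]
  have h : ∀ᵐ x ∂μ, (inner ℂ ((eL μ l) x) ((eL μ t) x) : ℂ) = eFun (t - l) x := by
    simp only [eL]
    filter_upwards [(eFun_memLp μ l).coeFn_toLp, (eFun_memLp μ t).coeFn_toLp] with x h1 h2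
    rw [h1, h2, RCLike.inner_apply, mul_comm, eFun_conj_mul]
  rw [integral_congr_ae h]
  rfl

set_option maxHeartbeats 1000000 in
lemma orthonormal_eL {n : ℕ} (μ : Measure (Fin n → ℝ)) [IsProbabilityMeasure μ]
    (Λ : Set (Fin n → ℝ))
    (horth : ∀ l ∈ Λ, ∀ l' ∈ Λ, l ≠ l' → muHat μ (l - l') = 0) :
    Orthonormal ℂ (fun l : Λ => eL μ (l : Fin n → ℝ)) := by
  rw [orthonormal_iff_ite]
  intro l l'
  rw [inner_eL]
  by_cases h : l = l'
  · subst h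
    simp [muHat_zero]
  · rw [if_neg h]
    exact horth _ l'.2 _ l.2 (fun hh => h (Subtype.ext hh.symm))

lemma norm_eL {n : ℕ} (μ : Measure (Fin n → ℝ)) [IsProbabilityMeasure μ] (t : Fin n → ℝ) :
    ‖eL μ t‖ ^ 2 = 1 := by
  have h := inner_eL μ t t
  rw [sub_self, muHat_zero] at h
  have := @inner_self_eq_norm_sq ℂ _ _ _ _ (eL μ t)
  rw [← this, h]
  simp

theorem stmt3 {n : ℕ} (μ : Measure (Fin n → ℝ)) [IsProbabilityMeasure μ]
    (Λ : Set (Fin n → ℝ))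
    (horth : ∀ l ∈ Λ, ∀ l' ∈ Λ, l ≠ l' → muHat μ (l - l') = 0) :
    (∀ t ∉ Λ, ∃ l ∈ Λ, muHat μ (t - l) ≠ 0) ↔
      (∀ t : Fin n → ℝ,
        0 < ∑' l : Λ, ((‖muHat μ (t - (l : Fin n → ℝ))‖₊ : ℝ≥0∞) ^ 2) ∧
        ∑' l : Λ, ((‖muHat μ (t - (l : Fin n → ℝ))‖₊ : ℝ≥0∞) ^ 2) ≤ 1) := by
  constructor
  · intro hmax t
    constructor
    · by_cases ht : t ∈ Λ
      · refine lt_of_lt_of_le ?_ (ENNReal.le_tsum ⟨t, ht⟩)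
        simp [muHat_zero]
      · obtain ⟨l, hl, hne⟩ := hmax t ht
        refine lt_of_lt_of_le ?_ (ENNReal.le_tsum ⟨l, hl⟩)
        simpa [pos_iff_ne_zero] using hne
    · rw [ENNReal.tsum_eq_iSup_sum]
      refine iSup_le fun s => ?_
      have hb := (orthonormal_eL μ Λ horth).sum_inner_products_le (x := eL μ t) (s := s)
      rw [norm_eL] at hb
      simp_rw [inner_eL] at hb
      have heq : ∀ l : Λ, ((‖muHat μ (t - (l : Fin n → ℝ))‖₊ : ℝ≥0∞) ^ 2)
          = ENNReal.ofReal (‖muHat μ (t - (l : Fin n → ℝ))‖ ^ 2) := by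
        intro l
        rw [ENNReal.ofReal_pow (norm_nonneg _), ofReal_norm_eq_enorm]; rfl
      calc ∑ l ∈ s, ((‖muHat μ (t - (l : Fin n → ℝ))‖₊ : ℝ≥0∞) ^ 2)
          = ∑ l ∈ s, ENNReal.ofReal (‖muHat μ (t - (l : Fin n → ℝ))‖ ^ 2) := by
            exact Finset.sum_congr rfl fun l _ => heq l
        _ = ENNReal.ofReal (∑ l ∈ s, ‖muHat μ (t - (l : Fin n → ℝ))‖ ^ 2) := by
            rw [ENNReal.ofReal_sum_of_nonneg]
            intro l _; positivity
        _ ≤ ENNReal.ofReal 1 := ENNReal.ofReal_le_ofReal hb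
        _ = 1 := ENNReal.ofReal_one
  · intro h t ht
    by_contra hc
    push_neg at hc
    have hpos := (h t).1
    have hz : ∑' l : Λ, ((‖muHat μ (t - (l : Fin n → ℝ))‖₊ : ℝ≥0∞) ^ 2) = 0 :=
      ENNReal.tsum_eq_zero.mpr fun l => by simp [hc l l.2]
    rw [hz] at hpos
    exact lt_irrefl _ hpos
end

section
/- Let A be a finite subset of ℝ^n. If A is a spectral set with spectrum Λ (so #Λ = #A = N), then the function c(t) = (1/N) Σ_{λ∈Λ} e^{2πi λ·t} satisfies: (1) c(a'−a) = δ_{a,a'} for a, a' ∈ A; (2) c(−t) = conj(c(t)) for all t; (3) c(u₁−u₂) = Σ_{a∈A} c(u₁+a)·conj(c(u₂+a)) for all u₁, u₂ ∈ ℝ^n. -/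
open Complex Matrix

noncomputable def Efun (x : ℝ) : ℂ := Complex.exp (2 * (Real.pi : ℂ) * Complex.I * (x : ℂ))

lemma Efun_add (x y : ℝ) : Efun (x + y) = Efun x * Efun y := by
  rw [Efun, Efun, Efun, ← Complex.exp_add]
  push_cast
  ring_nf

lemma Efun_conj (x : ℝ) : starRingEnd ℂ (Efun x) = Efun (-x) := by
  rw [Efun, Efun, ← Complex.exp_conj]
  congr 1
  simp only [_root_.map_mul, Complex.conj_I, Complex.conj_ofReal, map_ofNat]
  push_cast
  ring

lemma colKey {n N : ℕ} (A Λ : Finset (Fin n → ℝ)) (hN : 0 < N)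
    (hAcard : A.card = N) (hΛcard : Λ.card = N)
    (hspec : ∀ a ∈ A, ∀ a' ∈ A,
      ∑ l ∈ Λ, Complex.exp (2 * (Real.pi : ℂ) * Complex.I *
        ((∑ i, (a i - a' i) * l i : ℝ) : ℂ)) = if a = a' then (N : ℂ) else 0) :
    ∀ l ∈ Λ, ∀ m ∈ Λ, ∑ a ∈ A, Efun (∑ i, (l i - m i) * a i) = if l = m then (N : ℂ) else 0 := by
  have hNC : ((N : ℂ)) ≠ 0 := Nat.cast_ne_zero.mpr hN.ne'
  have hcard : Fintype.card ↥Λ = Fintype.card ↥A := by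
    simp [Fintype.card_coe, hAcard, hΛcard]
  let e : ↥Λ ≃ ↥A := Fintype.equivOfCardEq hcard
  let M : Matrix ↥A ↥A ℂ := fun a j => Efun (∑ i, (a : Fin n → ℝ) i * (e.symm j : Fin n → ℝ) i)
  have h1 : M * Mᴴ = (N : ℂ) • 1 := by
    ext a a'
    simp only [Matrix.mul_apply, Matrix.conjTranspose_apply, Matrix.smul_apply, Matrix.one_apply]
    have : ∀ j : ↥A, M a j * star (M a' j)
        = Efun (∑ i, ((a : Fin n → ℝ) i - (a' : Fin n → ℝ) i) * (e.symm j : Fin n → ℝ) i) := by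
      intro j
      rw [← starRingEnd_apply]
      rw [show M a j * starRingEnd ℂ (M a' j) = M a j * Efun (-(∑ i, (a' : Fin n → ℝ) i * (e.symm j : Fin n → ℝ) i)) from by rw [Efun_conj]]
      rw [show (M a j : ℂ) = Efun (∑ i, (a : Fin n → ℝ) i * (e.symm j : Fin n → ℝ) i) from rfl]
      rw [← Efun_add]
      congr 1
      rw [← Finset.sum_neg_distrib, ← Finset.sum_add_distrib]
      exact Finset.sum_congr rfl (fun i _ => by ring)
    rw [Finset.sum_congr rfl (fun j _ => this j)]
    have hsum : ∑ j : ↥A, Efun (∑ i, ((a : Fin n → ℝ) i - (a' : Fin n → ℝ) i) * (e.symm j : Fin n → ℝ) i)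
        = ∑ l : ↥Λ, Efun (∑ i, ((a : Fin n → ℝ) i - (a' : Fin n → ℝ) i) * (l : Fin n → ℝ) i) := by
      rw [← Equiv.sum_comp e (fun j => Efun (∑ i, ((a : Fin n → ℝ) i - (a' : Fin n → ℝ) i) * (e.symm j : Fin n → ℝ) i))]
      simp
    rw [hsum]
    simp only [Efun]
    rw [Finset.sum_coe_sort Λ (fun l => Complex.exp (2 * (Real.pi : ℂ) * Complex.I * ((∑ i, ((a : Fin n → ℝ) i - (a' : Fin n → ℝ) i) * l i : ℝ) : ℂ)))]
    rw [hspec a a.2 a' a'.2]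
    by_cases h : a = a'
    · simp [h]
    · have h' : (a : Fin n → ℝ) ≠ (a' : Fin n → ℝ) := fun hh => h (Subtype.ext hh)
      simp [h, h']
  have h2 : Mᴴ * M = (N : ℂ) • 1 := by
    have hone : M * ((N : ℂ)⁻¹ • Mᴴ) = 1 := by
      rw [Matrix.mul_smul, h1, smul_smul, inv_mul_cancel₀ hNC, one_smul]
    have := mul_eq_one_comm.mp hone
    rw [Matrix.smul_mul] at this
    calc Mᴴ * M = (N : ℂ) • ((N : ℂ)⁻¹ • (Mᴴ * M)) := by
          rw [smul_smul, mul_inv_cancel₀ hNC, one_smul]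
      _ = (N : ℂ) • 1 := by rw [this]
  intro l hl m hm
  have key := congrArg (fun X => X (e ⟨m, hm⟩) (e ⟨l, hl⟩)) h2
  simp only [Matrix.mul_apply, Matrix.conjTranspose_apply, Matrix.smul_apply, Matrix.one_apply,
    Equiv.symm_apply_apply] at key
  have : ∀ a : ↥A, star (M a (e ⟨m, hm⟩)) * M a (e ⟨l, hl⟩)
      = Efun (∑ i, (l i - m i) * (a : Fin n → ℝ) i) := by
    intro a
    rw [← starRingEnd_apply]
    rw [show (M a (e ⟨l, hl⟩) : ℂ) = Efun (∑ i, (a : Fin n → ℝ) i * l i) from by simp [M, Equiv.symm_apply_apply],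
        show (M a (e ⟨m, hm⟩) : ℂ) = Efun (∑ i, (a : Fin n → ℝ) i * m i) from by simp [M, Equiv.symm_apply_apply],
        Efun_conj, ← Efun_add]
    congr 1
    rw [← Finset.sum_neg_distrib, ← Finset.sum_add_distrib]
    exact Finset.sum_congr rfl (fun i _ => by ring)
  rw [Finset.sum_congr rfl (fun a _ => this a)] at key
  rw [Finset.sum_coe_sort A (fun a => Efun (∑ i, (l i - m i) * a i))] at key
  rw [key]
  have : (e ⟨m, hm⟩ = e ⟨l, hl⟩) ↔ (l = m) := by
    rw [Equiv.apply_eq_iff_eq, Subtype.ext_iff]; exact eq_comm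
  by_cases h : l = m <;> simp [this, h]


theorem stmt6 {n N : ℕ} (A Λ : Finset (Fin n → ℝ)) (hN : 0 < N)
    (hAcard : A.card = N) (hΛcard : Λ.card = N)
    (hspec : ∀ a ∈ A, ∀ a' ∈ A,
      ∑ l ∈ Λ, Complex.exp (2 * (Real.pi : ℂ) * Complex.I *
        ((∑ i, (a i - a' i) * l i : ℝ) : ℂ)) = if a = a' then (N : ℂ) else 0)
    (c : (Fin n → ℝ) → ℂ)
    (hc : ∀ t, c t = (N : ℂ)⁻¹ * ∑ l ∈ Λ, Complex.exp (2 * (Real.pi : ℂ) * Complex.I *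
      ((∑ i, l i * t i : ℝ) : ℂ))) :
    (∀ a ∈ A, ∀ a' ∈ A, c (a' - a) = if a = a' then 1 else 0) ∧
    (∀ t : Fin n → ℝ, c (-t) = starRingEnd ℂ (c t)) ∧
    (∀ u₁ u₂ : Fin n → ℝ, c (u₁ - u₂) = ∑ a ∈ A, c (u₁ + a) * starRingEnd ℂ (c (u₂ + a))) := by
  have hNC : ((N : ℂ)) ≠ 0 := Nat.cast_ne_zero.mpr hN.ne'
  have hc' : ∀ t, c t = (N : ℂ)⁻¹ * ∑ l ∈ Λ, Efun (∑ i, l i * t i) := hc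
  have col := colKey A Λ hN hAcard hΛcard hspec
  refine ⟨?_, ?_, ?_⟩
  · intro a ha a' ha'
    rw [hc']
    have : ∀ l ∈ Λ, Efun (∑ i, l i * (a' - a) i)
        = Complex.exp (2 * (Real.pi : ℂ) * Complex.I * ((∑ i, (a' i - a i) * l i : ℝ) : ℂ)) := by
      intro l _
      rw [Efun]
      congr 2
      push_cast
      exact Finset.sum_congr rfl (fun i _ => by simp [Pi.sub_apply]; ring)
    rw [Finset.sum_congr rfl this, hspec a' ha' a ha]
    by_cases h : a = a'
    · rw [if_pos h.symm, if_pos h, inv_mul_cancel₀ hNC]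
    · rw [if_neg (fun hh : a' = a => h hh.symm), if_neg h, mul_zero]
  · intro t
    rw [hc', hc', _root_.map_mul, map_sum]
    congr 1
    · simp
    · refine Finset.sum_congr rfl (fun l _ => ?_)
      rw [Efun_conj]
      congr 1
      simp
  · intro u₁ u₂
    have hL : ∀ a ∈ A, c (u₁ + a) * starRingEnd ℂ (c (u₂ + a))
        = (N : ℂ)⁻¹ * (N : ℂ)⁻¹ * ∑ l ∈ Λ, ∑ m ∈ Λ,
          Efun (∑ i, l i * u₁ i) * Efun (-∑ i, m i * u₂ i) * Efun (∑ i, (l i - m i) * a i) := by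
      intro a ha
      rw [hc', hc', _root_.map_mul, map_sum]
      have hstep : ∀ l ∈ Λ, ∀ m ∈ Λ,
          Efun (∑ i, l i * (u₁ + a) i) * starRingEnd ℂ (Efun (∑ i, m i * (u₂ + a) i))
          = Efun (∑ i, l i * u₁ i) * Efun (-∑ i, m i * u₂ i) * Efun (∑ i, (l i - m i) * a i) := by
        intro l _ m _
        rw [Efun_conj, ← Efun_add, ← Efun_add, ← Efun_add]
        congr 1
        simp only [Pi.add_apply, mul_add, sub_mul, Finset.sum_add_distrib,
          Finset.sum_sub_distrib]
        ring
      calc ((N : ℂ)⁻¹ * ∑ l ∈ Λ, Efun (∑ i, l i * (u₁ + a) i)) *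
            (starRingEnd ℂ (N : ℂ)⁻¹ * ∑ m ∈ Λ, starRingEnd ℂ (Efun (∑ i, m i * (u₂ + a) i)))
          = (N : ℂ)⁻¹ * (N : ℂ)⁻¹ * ((∑ l ∈ Λ, Efun (∑ i, l i * (u₁ + a) i)) *
            ∑ m ∈ Λ, starRingEnd ℂ (Efun (∑ i, m i * (u₂ + a) i))) := by
            simp; ring
        _ = (N : ℂ)⁻¹ * (N : ℂ)⁻¹ * ∑ l ∈ Λ, ∑ m ∈ Λ,
            Efun (∑ i, l i * (u₁ + a) i) * starRingEnd ℂ (Efun (∑ i, m i * (u₂ + a) i)) := by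
            rw [Finset.sum_mul_sum]
        _ = _ := by
            congr 1
            exact Finset.sum_congr rfl (fun l hl => Finset.sum_congr rfl (fun m hm => hstep l hl m hm))
    rw [Finset.sum_congr rfl hL, ← Finset.mul_sum, Finset.sum_comm]
    have : ∀ l ∈ Λ, (∑ a ∈ A, ∑ m ∈ Λ,
        Efun (∑ i, l i * u₁ i) * Efun (-∑ i, m i * u₂ i) * Efun (∑ i, (l i - m i) * a i))
        = Efun (∑ i, l i * u₁ i) * Efun (-∑ i, l i * u₂ i) * (N : ℂ) := by
      intro l hl
      rw [Finset.sum_comm]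
      have h1 : ∀ m ∈ Λ, (∑ a ∈ A,
          Efun (∑ i, l i * u₁ i) * Efun (-∑ i, m i * u₂ i) * Efun (∑ i, (l i - m i) * a i))
          = Efun (∑ i, l i * u₁ i) * Efun (-∑ i, m i * u₂ i) * (if l = m then (N : ℂ) else 0) := by
        intro m hm
        rw [← Finset.mul_sum, col l hl m hm]
      rw [Finset.sum_congr rfl h1]
      rw [Finset.sum_eq_single l (fun m _ hml => by simp [Ne.symm hml]) (fun h => absurd hl h)]
      simp
    rw [Finset.sum_congr rfl this]
    rw [hc']
    have hE : ∀ l ∈ Λ, Efun (∑ i, l i * u₁ i) * Efun (-∑ i, l i * u₂ i) * (N : ℂ)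
        = Efun (∑ i, l i * (u₁ - u₂) i) * (N : ℂ) := by
      intro l _
      rw [← Efun_add]
      congr 2
      simp only [Pi.sub_apply, mul_sub, Finset.sum_sub_distrib]
      ring
    rw [Finset.sum_congr rfl hE, ← Finset.sum_mul]
    field_simp
end

section
/- Let A ⊆ ℝ^n be finite of cardinality N, and suppose there exists a continuous function c : ℝ^n → ℂ with c(a'−a) = δ_{a,a'} for a,a' ∈ A, c(−t) = conj(c(t)), and c(u₁−u₂) = Σ_{a∈A} c(u₁+a)·conj(c(u₂+a)) for all u₁,u₂ ∈ ℝ^n. Then the matrices U(t) defined by U(t)_{a,a'} = c(t + a' − a) form a group of unitary N×N matrices: U(t₁)U(t₂) = U(t₁+t₂), U(0) = I, and U(−t) = U(t)*. -/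
open Complex Matrix

theorem stmt7 {n : ℕ} (A : Finset (Fin n → ℝ))
    (c : (Fin n → ℝ) → ℂ) (hcont : Continuous c)
    (hδ : ∀ a ∈ A, ∀ a' ∈ A, c (a' - a) = if a = a' then 1 else 0)
    (hconj : ∀ t : Fin n → ℝ, c (-t) = starRingEnd ℂ (c t))
    (hker : ∀ u₁ u₂ : Fin n → ℝ,
      c (u₁ - u₂) = ∑ a ∈ A, c (u₁ + a) * starRingEnd ℂ (c (u₂ + a)))
    (U : (Fin n → ℝ) → Matrix ↥A ↥A ℂ)
    (hU : ∀ t (a a' : ↥A), U t a a' = c (t + (a' : Fin n → ℝ) - (a : Fin n → ℝ))) :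
    (∀ t₁ t₂ : Fin n → ℝ, U t₁ * U t₂ = U (t₁ + t₂)) ∧
    (U 0 = 1) ∧
    (∀ t : Fin n → ℝ, U (-t) = (U t)ᴴ) ∧
    (∀ t : Fin n → ℝ, U t * (U t)ᴴ = 1) := by
  have hmul : ∀ t₁ t₂ : Fin n → ℝ, U t₁ * U t₂ = U (t₁ + t₂) := by
    intro t₁ t₂
    ext a a'
    rw [Matrix.mul_apply, hU]
    have key : ∑ b : ↥A, U t₁ a b * U t₂ b a'
        = ∑ b : ↥A, c ((t₁ - a) + b) * starRingEnd ℂ (c ((-t₂ - a') + b)) := by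
      apply Finset.sum_congr rfl
      intro b _
      rw [hU, hU, ← hconj ((-t₂ - (a' : Fin n → ℝ)) + b)]
      congr 1
      · congr 1; ring
      · congr 1; ring
    rw [key, Finset.sum_coe_sort A
      (fun b => c ((t₁ - a) + b) * starRingEnd ℂ (c ((-t₂ - a') + b))), ← hker]
    congr 1; ring
  have h0 : U 0 = 1 := by
    ext a a'
    have h : (0 : Fin n → ℝ) + (a' : Fin n → ℝ) - a = (a' : Fin n → ℝ) - a := by ring
    rw [hU, h, hδ a a.2 a' a'.2, Matrix.one_apply]
    simp only [Subtype.ext_iff]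
  have hadj : ∀ t : Fin n → ℝ, U (-t) = (U t)ᴴ := by
    intro t
    ext a a'
    have h := hconj (t + (a : Fin n → ℝ) - a')
    simp only [starRingEnd_apply] at h
    rw [hU, Matrix.conjTranspose_apply, hU, ← h]
    congr 1; ring
  refine ⟨hmul, h0, hadj, fun t => ?_⟩
  rw [← hadj, hmul, add_neg_cancel, h0]
end

section
/- Let μ be a probability measure on ℝ^n with compact support X, having the local translation property that μ(A) = μ(A + γ) whenever A and A + γ are both Borel subsets of X. Let Γ be a countable subgroup of ℝ^n. Then there exists a Borel measure μ̃ on ℝ^n such that (i) μ̃(A) = μ̃(A + γ) for all Borel A ⊆ X + Γ and γ ∈ Γ, and (ii) the restriction of μ̃ to X equals μ. -/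
open MeasureTheory Pointwise

private lemma img_eq_pre {V : Type*} [AddCommGroup V] (c : V) (S : Set V) :
    (fun x => x + c) '' S = (fun x => x + (-c)) ⁻¹' S := by
  ext x
  simp only [Set.mem_image, Set.mem_preimage]
  constructor
  · rintro ⟨y, hy, rfl⟩
    simpa using hy
  · intro h
    exact ⟨x + -c, h, by abel⟩

private lemma shift_pre {V : Type*} [AddCommGroup V] (a b : V) (S : Set V) :
    (fun x => x + (b - a)) '' ((fun x => x + b) ⁻¹' S) = (fun x => x + a) ⁻¹' S := by
  ext x
  simp only [Set.mem_image, Set.mem_preimage]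
  constructor
  · rintro ⟨y, hy, rfl⟩
    have : y + (b - a) + a = y + b := by abel
    rw [this]; exact hy
  · intro h
    refine ⟨x + (a - b), ?_, by abel⟩
    have : x + (a - b) + b = x + a := by abel
    rw [this]; exact h

theorem stmt9 {n : ℕ} (μ : Measure (Fin n → ℝ)) [IsProbabilityMeasure μ]
    (X : Set (Fin n → ℝ)) (hX : IsCompact X) (hXfull : μ X = 1)
    (hloc : ∀ (A : Set (Fin n → ℝ)) (γ : Fin n → ℝ), MeasurableSet A →
      A ⊆ X → (fun x => x + γ) '' A ⊆ X → μ ((fun x => x + γ) '' A) = μ A)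
    (Γ : AddSubgroup (Fin n → ℝ)) (hΓ : (Γ : Set (Fin n → ℝ)).Countable) :
    ∃ μt : Measure (Fin n → ℝ),
      (∀ (A : Set (Fin n → ℝ)), MeasurableSet A → A ⊆ X + (Γ : Set (Fin n → ℝ)) →
        ∀ γ ∈ Γ, μt ((fun x => x + γ) '' A) = μt A) ∧
      μt.restrict X = μ := by
  classical
  have hXm : MeasurableSet X := hX.isClosed.measurableSet
  -- enumerate Γ with γ 0 = 0
  obtain ⟨f, hf⟩ := hΓ.exists_eq_range ⟨0, Γ.zero_mem⟩
  set γ : ℕ → (Fin n → ℝ) := fun k => if k = 0 then 0 else f (k - 1) with hγdef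
  have hγ0 : γ 0 = 0 := by simp [hγdef]
  have hγmem : ∀ k, γ k ∈ Γ := by
    intro k
    by_cases h : k = 0
    · simp [hγdef, h, Γ.zero_mem]
    · have : f (k - 1) ∈ (Γ : Set (Fin n → ℝ)) := by rw [hf]; exact Set.mem_range_self _
      simpa [hγdef, h] using this
  have hγsurj : ∀ g ∈ Γ, ∃ k, γ k = g := by
    intro g hg
    have : g ∈ Set.range f := by rw [← hf]; exact hg
    obtain ⟨j, hj⟩ := this
    exact ⟨j + 1, by simp [hγdef, hj]⟩
  -- the translates of X and their disjointification
  set Xb : ℕ → Set (Fin n → ℝ) := fun k => (fun x => x + γ k) '' X with hXbdef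
  have hXbm : ∀ k, MeasurableSet (Xb k) := by
    intro k
    show MeasurableSet ((fun x => x + γ k) '' X)
    rw [img_eq_pre]
    exact hXm.preimage (measurable_add_const _)
  set Xs : ℕ → Set (Fin n → ℝ) := disjointed Xb with hXsdef
  have hXsm : ∀ k, MeasurableSet (Xs k) := MeasurableSet.disjointed hXbm
  have hXsd : Pairwise (Function.onFun Disjoint Xs) := disjoint_disjointed Xb
  have hXs0 : Xs 0 = X := by
    rw [hXsdef, disjointed_zero, hXbdef]
    simp [hγ0]
  have hXssub : ∀ k, Xs k ⊆ Xb k := disjointed_subset Xb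
  have hUb : (⋃ k, Xb k) = X + (Γ : Set (Fin n → ℝ)) := by
    ext x
    simp only [Set.mem_iUnion, hXbdef, Set.mem_image, Set.mem_add]
    constructor
    · rintro ⟨k, y, hy, rfl⟩
      exact ⟨y, hy, γ k, hγmem k, rfl⟩
    · rintro ⟨y, hy, g, hg, rfl⟩
      obtain ⟨k, hk⟩ := hγsurj g hg
      exact ⟨k, y, hy, by rw [hk]⟩
  have hU : (⋃ k, Xs k) = X + (Γ : Set (Fin n → ℝ)) := by
    rw [hXsdef, iUnion_disjointed, hUb]
  -- pieces of a set inside Xs k pulled back to X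
  have hpull : ∀ (S : Set (Fin n → ℝ)) (k : ℕ), (fun x => x + γ k) ⁻¹' (S ∩ Xs k) ⊆ X := by
    intro S k x hx
    have hx2 : x + γ k ∈ Xb k := hXssub k hx.2
    obtain ⟨y, hy, hyx⟩ := hx2
    have : y = x := by
      have := add_right_cancel hyx
      exact this
    rwa [← this]
  -- the candidate measure
  set μt : Measure (Fin n → ℝ) := Measure.sum (fun k => (μ.map (fun x => x + γ k)).restrict (Xs k))
    with hμtdef
  have hμtapp : ∀ (A : Set (Fin n → ℝ)), MeasurableSet A →
      μt A = ∑' k, μ ((fun x => x + γ k) ⁻¹' (A ∩ Xs k)) := by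
    intro A hA
    rw [hμtdef, Measure.sum_apply _ hA]
    congr 1
    ext k
    rw [Measure.restrict_apply hA,
      Measure.map_apply (measurable_add_const _) (hA.inter (hXsm k))]
  -- key lemma: if C ⊆ X + Γ and C - δ ⊆ X then μt C = μ (C - δ)
  have key : ∀ (C : Set (Fin n → ℝ)), MeasurableSet C → C ⊆ X + (Γ : Set (Fin n → ℝ)) →
      ∀ δ : Fin n → ℝ, (fun x => x + δ) ⁻¹' C ⊆ X → μt C = μ ((fun x => x + δ) ⁻¹' C) := by
    intro C hC hCsub δ hδ
    rw [hμtapp C hC]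
    have hterm : ∀ k, μ ((fun x => x + γ k) ⁻¹' (C ∩ Xs k))
        = μ ((fun x => x + δ) ⁻¹' (C ∩ Xs k)) := by
      intro k
      have hA : MeasurableSet ((fun x => x + γ k) ⁻¹' (C ∩ Xs k)) :=
        (hC.inter (hXsm k)).preimage (measurable_add_const _)
      have hAX : (fun x => x + γ k) ⁻¹' (C ∩ Xs k) ⊆ X := hpull C k
      have himg : (fun x => x + (γ k - δ)) '' ((fun x => x + γ k) ⁻¹' (C ∩ Xs k))
          = (fun x => x + δ) ⁻¹' (C ∩ Xs k) := shift_pre δ (γ k) (C ∩ Xs k)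
      have himgX : (fun x => x + (γ k - δ)) '' ((fun x => x + γ k) ⁻¹' (C ∩ Xs k)) ⊆ X := by
        rw [himg]
        intro x hx
        exact hδ hx.1
      have := hloc _ (γ k - δ) hA hAX himgX
      rw [himg] at this
      exact this.symm
    rw [tsum_congr hterm]
    have hdis : Pairwise (Function.onFun Disjoint fun k => (fun x => x + δ) ⁻¹' (C ∩ Xs k)) := by
      intro i j hij
      exact Disjoint.preimage _ (Set.disjoint_of_subset_left
        Set.inter_subset_right (Set.disjoint_of_subset_right Set.inter_subset_right
          (hXsd hij)))
    have hmeas : ∀ k, MeasurableSet ((fun x => x + δ) ⁻¹' (C ∩ Xs k)) := fun k =>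
      (hC.inter (hXsm k)).preimage (measurable_add_const _)
    rw [← measure_iUnion hdis hmeas]
    congr 1
    rw [← Set.preimage_iUnion, ← Set.inter_iUnion, hU,
      Set.inter_eq_self_of_subset_left hCsub]
  refine ⟨μt, ?_, ?_⟩
  · -- translation invariance on X + Γ
    intro A hA hAsub g hg
    rw [img_eq_pre]
    have hAU : A = ⋃ k, A ∩ Xs k := by
      rw [← Set.inter_iUnion, hU, Set.inter_eq_self_of_subset_left hAsub]
    have hdis : Pairwise (Function.onFun Disjoint fun k => A ∩ Xs k) := fun i j hij =>
      Set.disjoint_of_subset_left Set.inter_subset_right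
        (Set.disjoint_of_subset_right Set.inter_subset_right (hXsd hij))
    have hmeas : ∀ k, MeasurableSet (A ∩ Xs k) := fun k => hA.inter (hXsm k)
    have hdis' : Pairwise (Function.onFun Disjoint fun k => (fun x => x + (-g)) ⁻¹' (A ∩ Xs k)) :=
      fun i j hij => Disjoint.preimage _ (hdis hij)
    have hmeas' : ∀ k, MeasurableSet ((fun x => x + (-g)) ⁻¹' (A ∩ Xs k)) := fun k =>
      (hmeas k).preimage (measurable_add_const _)
    calc μt ((fun x => x + (-g)) ⁻¹' A)
        = μt (⋃ k, (fun x => x + (-g)) ⁻¹' (A ∩ Xs k)) := by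
          rw [← Set.preimage_iUnion, ← hAU]
      _ = ∑' k, μt ((fun x => x + (-g)) ⁻¹' (A ∩ Xs k)) := measure_iUnion hdis' hmeas'
      _ = ∑' k, μt (A ∩ Xs k) := by
          refine tsum_congr fun k => ?_
          have h1 : μt ((fun x => x + (-g)) ⁻¹' (A ∩ Xs k))
              = μ ((fun x => x + (γ k + g)) ⁻¹' ((fun x => x + (-g)) ⁻¹' (A ∩ Xs k))) := by
            refine key _ (hmeas' k) ?_ (γ k + g) ?_
            · intro x hx
              have hx' : x + -g ∈ A ∩ Xs k := hx
              have : x + -g ∈ X + (Γ : Set (Fin n → ℝ)) := hAsub hx'.1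
              obtain ⟨y, hy, g', hg', hygx⟩ := this
              refine ⟨y, hy, g' + g, Γ.add_mem hg' hg, ?_⟩
              have hygx' : y + g' = x + -g := hygx
              show y + (g' + g) = x
              rw [← add_assoc, hygx']
              abel
            · intro x hx
              have hx' : x + (γ k + g) + -g ∈ A ∩ Xs k := hx
              have hxe : x + (γ k + g) + -g = x + γ k := by abel
              rw [hxe] at hx'
              exact hpull A k hx'
          have h2 : μt (A ∩ Xs k) = μ ((fun x => x + γ k) ⁻¹' (A ∩ Xs k)) := by
            refine key _ (hmeas k) (fun x hx => hAsub hx.1) (γ k) (hpull A k)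
          rw [h1, h2]
          congr 1
          ext x
          simp only [Set.mem_preimage]
          have : x + (γ k + g) + -g = x + γ k := by abel
          rw [this]
      _ = μt (⋃ k, A ∩ Xs k) := (measure_iUnion hdis hmeas).symm
      _ = μt A := by rw [← hAU]
  · -- restriction to X is μ
    have hXc : μ Xᶜ = 0 := by
      rw [measure_compl hXm (by simp), hXfull, measure_univ, tsub_self]
    ext s hs
    rw [Measure.restrict_apply hs, hμtapp (s ∩ X) (hs.inter hXm)]
    have hzero : ∀ k, k ≠ 0 → μ ((fun x => x + γ k) ⁻¹' (s ∩ X ∩ Xs k)) = 0 := by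
      intro k hk
      have hdisj : Disjoint X (Xs k) := by
        rw [← hXs0]
        exact hXsd (Ne.symm hk)
      have : s ∩ X ∩ Xs k = ∅ := by
        rw [Set.inter_assoc]
        rw [Set.disjoint_iff_inter_eq_empty] at hdisj
        rw [hdisj, Set.inter_empty]
      simp [this]
    rw [tsum_eq_single 0 hzero]
    have : s ∩ X ∩ Xs 0 = s ∩ X := by
      rw [hXs0, Set.inter_assoc, Set.inter_self]
    rw [this, hγ0]
    have hpre : (fun x : Fin n → ℝ => x + 0) ⁻¹' (s ∩ X) = s ∩ X := by
      ext x; simp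
    rw [hpre]
    exact measure_inter_conull hXc
end

section
/- Let μ = μ_B be the self-similar measure with equal weights of the affine IFS τ_b(x) = R^{-1}(x+b), b ∈ B, N = #B, S = Rᵗ. Suppose μ has a spectrum Λ which decomposes as a disjoint union Λ = ⋃_{i=1}^p (a_i + SΛ_i) with each Λ_i ⊆ Per(δ̂_B) (the period group of δ̂_B) and each Λ_i itself a spectrum for μ. Then p = N and {S^{-1}a_1, …, S^{-1}a_p} is a spectrum for the counting measure δ_B = (1/N)Σ_{b∈B} δ_b, i.e., Σ_{i=1}^p |δ̂_B(t − S^{-1}a_i)|² = 1 for all t. -/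
open MeasureTheory Complex ENNReal

/-- `δ̂_B(x) = (1/N) ∑_{b∈B} e^{2πi b·x}`. -/
noncomputable def deltaHat {n : ℕ} (B : Finset (Fin n → ℝ)) (x : Fin n → ℝ) : ℂ :=
  (B.card : ℂ)⁻¹ * ∑ b ∈ B, Complex.exp (2 * (Real.pi : ℂ) * Complex.I *
    ((∑ i, b i * x i : ℝ) : ℂ))

open Matrix

namespace Stmt19Aux
variable {n : ℕ}

noncomputable def ch (v u : Fin n → ℝ) : ℂ :=
  Complex.exp (2 * (Real.pi : ℂ) * Complex.I * ((v ⬝ᵥ u : ℝ) : ℂ))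

lemma ch_add (v u w : Fin n → ℝ) : ch v (u + w) = ch v u * ch v w := by
  rw [ch, ch, ch, ← Complex.exp_add]
  congr 1
  rw [dotProduct_add]
  push_cast; ring

lemma ch_add_left (v w u : Fin n → ℝ) : ch (v + w) u = ch v u * ch w u := by
  rw [ch, ch, ch, ← Complex.exp_add]
  congr 1
  rw [add_dotProduct]
  push_cast; ring

lemma ch_zero (v : Fin n → ℝ) : ch v 0 = 1 := by
  simp [ch]

lemma ch_zero_left (u : Fin n → ℝ) : ch 0 u = 1 := by
  simp [ch]

lemma ch_ne_zero (v u : Fin n → ℝ) : ch v u ≠ 0 := Complex.exp_ne_zero _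

lemma ch_comm (v u : Fin n → ℝ) : ch v u = ch u v := by
  rw [ch, ch, dotProduct_comm]

lemma ch_norm (v u : Fin n → ℝ) : ‖ch v u‖ = 1 := by
  have h : (2 * (Real.pi : ℂ) * Complex.I * ((v ⬝ᵥ u : ℝ) : ℂ))
      = ((2 * Real.pi * (v ⬝ᵥ u) : ℝ) : ℂ) * Complex.I := by push_cast; ring
  rw [ch, h, Complex.norm_exp_ofReal_mul_I]

lemma ch_conj (v u : Fin n → ℝ) : (starRingEnd ℂ) (ch v u) = ch (-v) u := by
  rw [ch, ch, ← Complex.exp_conj]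
  congr 1
  rw [neg_dotProduct]
  simp only [_root_.map_mul, Complex.conj_I, Complex.conj_ofReal, map_ofNat]
  push_cast
  ring

noncomputable def chHom (v : Fin n → ℝ) : Multiplicative (Fin n → ℝ) →* ℂ where
  toFun u := ch v u.toAdd
  map_one' := ch_zero v
  map_mul' u w := ch_add v u.toAdd w.toAdd

lemma chHom_inj : Function.Injective (chHom (n := n)) := by
  intro v w h
  by_contra hne
  obtain ⟨j, hj⟩ : ∃ j, (v - w) j ≠ 0 := by
    by_contra h'; push_neg at h'
    exact hne (sub_eq_zero.mp (funext h'))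
  set u : Fin n → ℝ := Pi.single j ((2 * (v - w) j)⁻¹) with hu
  have h1 : ch v u = ch w u := DFunLike.congr_fun h (Multiplicative.ofAdd u)
  have h2 : ch (v - w) u = 1 := by
    have hv : ch v u = ch w u * ch (v - w) u := by
      rw [← ch_add_left]; congr 2; abel
    rw [h1] at hv
    exact (mul_left_cancel₀ (ch_ne_zero w u) (by rw [mul_one]; exact hv)).symm
  have h3 : ((v - w) ⬝ᵥ u : ℝ) = 2⁻¹ := by
    rw [hu, dotProduct_single]
    rw [mul_comm (2:ℝ) ((v - w) j), mul_inv, ← mul_assoc, mul_inv_cancel₀ hj, one_mul]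
  rw [ch, h3] at h2
  have h4 : (2 * (Real.pi : ℂ) * Complex.I * ((2⁻¹ : ℝ) : ℂ)) = (Real.pi : ℂ) * Complex.I := by
    push_cast; ring
  rw [h4, Complex.exp_pi_mul_I] at h2
  norm_num at h2

lemma ch_li : LinearIndependent ℂ (fun v : Fin n → ℝ => ch v) :=
  (linearIndependent_monoidHom (Multiplicative (Fin n → ℝ)) ℂ).comp chHom chHom_inj

lemma ch_comb_eq_zero {V : Finset (Fin n → ℝ)} {γ : (Fin n → ℝ) → ℂ}
    (h : ∀ u, ∑ v ∈ V, γ v * ch v u = 0) : ∀ v ∈ V, γ v = 0 := by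
  refine linearIndependent_iff'.1 ch_li V γ ?_
  funext u
  simpa [Finset.sum_apply] using h u

lemma muHat_def (μ : Measure (Fin n → ℝ)) (t : Fin n → ℝ) :
    muHat μ t = ∫ x, ch t x ∂μ := rfl

lemma deltaHat_def (B : Finset (Fin n → ℝ)) (x : Fin n → ℝ) :
    deltaHat B x = (B.card : ℂ)⁻¹ * ∑ b ∈ B, ch b x := rfl

lemma ch_continuous (v : Fin n → ℝ) : Continuous (ch v) := by
  have h1 : Continuous fun u : Fin n → ℝ => (v ⬝ᵥ u : ℝ) :=
    continuous_finset_sum _ fun i _ => continuous_const.mul (continuous_apply i)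
  exact Complex.continuous_exp.comp (continuous_const.mul (Complex.continuous_ofReal.comp h1))

lemma ch_integrable (v : Fin n → ℝ) (ν : Measure (Fin n → ℝ)) [IsFiniteMeasure ν] :
    Integrable (ch v) ν := by
  refine ⟨(ch_continuous v).aestronglyMeasurable, ?_⟩
  apply HasFiniteIntegral.of_bounded (C := 1)
  filter_upwards with x
  rw [ch_norm]

lemma isUnit_det_of_spec (R : Matrix (Fin n) (Fin n) ℝ)
    (hR : ∀ z ∈ spectrum ℂ (R.map (Complex.ofReal)), 1 < ‖z‖) : IsUnit R.det := by
  rw [isUnit_iff_ne_zero]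
  intro h0
  have hC : ¬ IsUnit (R.map (Complex.ofReal)) := by
    rw [Matrix.isUnit_iff_isUnit_det]
    have hdet : (R.map (Complex.ofReal)).det = ((R.det : ℝ) : ℂ) :=
      (RingHom.map_det Complex.ofRealHom R).symm
    rw [hdet, h0]
    simp
  have := hR 0 ((spectrum.zero_mem_iff ℂ).mpr hC)
  norm_num at this

lemma refinement (R : Matrix (Fin n) (Fin n) ℝ)
    (B : Finset (Fin n → ℝ))
    (τ : (Fin n → ℝ) → (Fin n → ℝ) → (Fin n → ℝ))
    (hτ : ∀ b x, τ b x = R⁻¹.mulVec (x + b))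
    (μ : Measure (Fin n → ℝ)) [IsProbabilityMeasure μ]
    (hself : μ = (B.card : ℝ≥0∞)⁻¹ • ∑ b ∈ B, μ.map (τ b))
    (x : Fin n → ℝ) :
    muHat μ x = deltaHat B ((R.transpose)⁻¹.mulVec x) * muHat μ ((R.transpose)⁻¹.mulVec x) := by
  set w := (R.transpose)⁻¹.mulVec x with hw
  have hτc : ∀ b, Continuous (τ b) := by
    intro b
    rw [show τ b = fun y => R⁻¹.mulVec (y + b) from funext (hτ b)]
    exact ((LinearMap.continuous_of_finiteDimensional (Matrix.mulVecLin R⁻¹))).comp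
      (continuous_id.add continuous_const)
  have hdot : ∀ z : Fin n → ℝ, (x ⬝ᵥ R⁻¹.mulVec z : ℝ) = w ⬝ᵥ z := by
    intro z
    rw [dotProduct_mulVec, hw, ← transpose_nonsing_inv, mulVec_transpose]
  have hint : ∀ b ∈ B, Integrable (fun y => ch x y) (μ.map (τ b)) := by
    intro b _
    have : IsProbabilityMeasure (μ.map (τ b)) :=
      Measure.isProbabilityMeasure_map (hτc b).measurable.aemeasurable
    exact ch_integrable x _
  calc muHat μ x = ∫ y, ch x y ∂((B.card : ℝ≥0∞)⁻¹ • ∑ b ∈ B, μ.map (τ b)) := by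
        rw [muHat_def, ← hself]
    _ = ((B.card : ℝ≥0∞)⁻¹).toReal • ∑ b ∈ B, ∫ y, ch x y ∂(μ.map (τ b)) := by
        rw [integral_smul_measure, integral_finset_sum_measure hint]
    _ = (B.card : ℝ)⁻¹ • ∑ b ∈ B, ∫ y, ch x (τ b y) ∂μ := by
        congr 1
        · simp
        · refine Finset.sum_congr rfl fun b _ => ?_
          rw [integral_map (hτc b).measurable.aemeasurable (ch_continuous x).aestronglyMeasurable]
    _ = (B.card : ℝ)⁻¹ • ∑ b ∈ B, (muHat μ w * ch w b) := by
        refine congrArg _ (Finset.sum_congr rfl fun b _ => ?_)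
        have heq : ∀ y, ch x (τ b y) = ch w y * ch w b := by
          intro y
          rw [hτ, ch, hdot]
          exact ch_add w y b
        simp_rw [heq]
        rw [integral_mul_const, muHat_def]
    _ = deltaHat B w * muHat μ w := by
        have hsum : ∑ b ∈ B, ch w b = ∑ b ∈ B, ch b w :=
          Finset.sum_congr rfl fun b _ => ch_comm w b
        rw [← Finset.mul_sum, hsum, deltaHat_def, Complex.real_smul]
        push_cast
        ring

lemma deltaHat_mul_conj (B : Finset (Fin n → ℝ)) (hN : ((B.card : ℂ)) ≠ 0) (x : Fin n → ℝ) :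
    ((B.card : ℂ))^2 * (deltaHat B x * (starRingEnd ℂ) (deltaHat B x)) =
      ∑ b ∈ B, ∑ b' ∈ B, ch (b - b') x := by
  have h1 : (∑ b ∈ B, ch b x) * (∑ b' ∈ B, ch (-b') x) = ∑ b ∈ B, ∑ b' ∈ B, ch (b - b') x := by
    rw [Finset.sum_mul_sum]
    refine Finset.sum_congr rfl fun b _ => Finset.sum_congr rfl fun b' _ => ?_
    rw [← ch_add_left, sub_eq_add_neg]
  calc ((B.card : ℂ))^2 * (deltaHat B x * (starRingEnd ℂ) (deltaHat B x))
      = ((B.card : ℂ))^2 * ((B.card : ℂ)⁻¹ * (B.card : ℂ)⁻¹) *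
        ((∑ b ∈ B, ch b x) * (∑ b' ∈ B, ch (-b') x)) := by
        rw [deltaHat_def, _root_.map_mul, map_inv₀, map_natCast, map_sum]
        simp_rw [ch_conj]
        ring
    _ = ∑ b ∈ B, ∑ b' ∈ B, ch (b - b') x := by
        rw [h1, show ((B.card : ℂ))^2 * ((B.card : ℂ)⁻¹ * (B.card : ℂ)⁻¹) = 1 from
          by field_simp, one_mul]

end Stmt19Aux
theorem stmt19 {n : ℕ} (R : Matrix (Fin n) (Fin n) ℝ)
    (hR : ∀ z ∈ spectrum ℂ (R.map (Complex.ofReal)), 1 < ‖z‖)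
    (B : Finset (Fin n → ℝ)) (h0B : (0 : Fin n → ℝ) ∈ B)
    (τ : (Fin n → ℝ) → (Fin n → ℝ) → (Fin n → ℝ))
    (hτ : ∀ b x, τ b x = R⁻¹.mulVec (x + b))
    (μ : Measure (Fin n → ℝ)) [IsProbabilityMeasure μ]
    (hself : μ = (B.card : ℝ≥0∞)⁻¹ • ∑ b ∈ B, μ.map (τ b))
    (Λ : Set (Fin n → ℝ)) (hΛ : IsSpectrum μ Λ)
    (p : ℕ) (a : Fin p → (Fin n → ℝ)) (Λi : Fin p → Set (Fin n → ℝ))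
    (hper : ∀ i, ∀ l ∈ Λi i, ∀ x, deltaHat B (x + l) = deltaHat B x)
    (hdecomp : Λ = ⋃ i, (fun l => a i + R.transpose.mulVec l) '' Λi i)
    (hdisj : Pairwise (Function.onFun Disjoint
      (fun i => (fun l => a i + R.transpose.mulVec l) '' Λi i)))
    (hspec : ∀ i, IsSpectrum μ (Λi i)) :
    p = B.card ∧
      ∀ t : Fin n → ℝ, ∑ i, ‖deltaHat B (t - (R.transpose)⁻¹.mulVec (a i))‖ ^ 2 = 1 := by
  classical
  have hN : 0 < B.card := Finset.card_pos.mpr ⟨0, h0B⟩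
  have hdet : IsUnit R.det := Stmt19Aux.isUnit_det_of_spec R hR
  have hdetT : IsUnit (R.transpose).det := by rwa [Matrix.det_transpose]
  have hScancel : ∀ z : Fin n → ℝ,
      (R.transpose)⁻¹.mulVec ((R.transpose).mulVec z) = z := by
    intro z
    rw [Matrix.mulVec_mulVec, Matrix.nonsing_inv_mul _ hdetT, Matrix.one_mulVec]
  have hginj : ∀ i : Fin p, Function.Injective (fun l => a i + R.transpose.mulVec l) := by
    intro i l1 l2 h
    have h2 : (R.transpose).mulVec l1 = (R.transpose).mulVec l2 := by
      simpa using h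
    have h3 := congrArg ((R.transpose)⁻¹.mulVec) h2
    rwa [hScancel, hScancel] at h3
  -- key ENNReal identity
  have key : ∀ u : Fin n → ℝ,
      ∑ i, ((‖deltaHat B (u - (R.transpose)⁻¹.mulVec (a i))‖₊ : ℝ≥0∞)) ^ 2 = 1 := by
    intro u
    have h2 := hΛ ((R.transpose).mulVec u)
    set F : (Fin n → ℝ) → ℝ≥0∞ :=
      fun x => ((‖muHat μ ((R.transpose).mulVec u - x)‖₊ : ℝ≥0∞)) ^ 2 with hF
    have h2' : ∑' x : (Fin n → ℝ),
        (⋃ i, (fun l => a i + R.transpose.mulVec l) '' Λi i).indicator F x = 1 := by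
      rw [← tsum_subtype]
      rw [← hdecomp]
      exact h2
    have hind : ∀ x, (⋃ i, (fun l => a i + R.transpose.mulVec l) '' Λi i).indicator F x
        = ∑ i, ((fun l => a i + R.transpose.mulVec l) '' Λi i).indicator F x := by
      intro x
      by_cases hx : x ∈ ⋃ i, (fun l => a i + R.transpose.mulVec l) '' Λi i
      · obtain ⟨i, hi⟩ := Set.mem_iUnion.mp hx
        rw [Set.indicator_of_mem hx]
        rw [Finset.sum_eq_single i]
        · rw [Set.indicator_of_mem hi]
        · intro j _ hji
          refine Set.indicator_of_notMem (fun hj => ?_) F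
          exact Set.disjoint_left.mp (hdisj hji) hj hi
        · intro h; exact absurd (Finset.mem_univ i) h
      · rw [Set.indicator_of_notMem hx, eq_comm]
        refine Finset.sum_eq_zero fun i _ => ?_
        exact Set.indicator_of_notMem (fun hi => hx (Set.mem_iUnion.mpr ⟨i, hi⟩)) F
    rw [tsum_congr hind, Summable.tsum_finsetSum (fun i _ => ENNReal.summable)] at h2'
    have h3 : ∀ i : Fin p, ∑' x : (Fin n → ℝ),
        ((fun l => a i + R.transpose.mulVec l) '' Λi i).indicator F x
        = ((‖deltaHat B (u - (R.transpose)⁻¹.mulVec (a i))‖₊ : ℝ≥0∞)) ^ 2 := by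
      intro i
      rw [← tsum_subtype]
      rw [← (Equiv.Set.image _ (Λi i) (hginj i)).tsum_eq
        (fun z : ((fun l => a i + R.transpose.mulVec l) '' Λi i) => F z)]
      have h4 : ∀ l : Λi i,
          F ((Equiv.Set.image _ (Λi i) (hginj i)) l : Fin n → ℝ)
          = ((‖deltaHat B (u - (R.transpose)⁻¹.mulVec (a i))‖₊ : ℝ≥0∞)) ^ 2 *
            ((‖muHat μ ((u - (R.transpose)⁻¹.mulVec (a i)) - l)‖₊ : ℝ≥0∞)) ^ 2 := by
        rintro ⟨l, hl⟩
        have himg : ((Equiv.Set.image (fun l => a i + R.transpose.mulVec l) (Λi i)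
            (hginj i)) ⟨l, hl⟩ : Fin n → ℝ) = a i + R.transpose.mulVec l := by
          simp [Equiv.Set.image_apply]
        rw [himg]
        simp only [hF]
        have harg : (R.transpose)⁻¹.mulVec ((R.transpose).mulVec u
            - (a i + R.transpose.mulVec l))
            = (u - (R.transpose)⁻¹.mulVec (a i)) - l := by
          have e1 : (R.transpose).mulVec u - (a i + R.transpose.mulVec l)
              = (R.transpose).mulVec (u - l) - a i := by
            rw [Matrix.mulVec_sub]; abel
          rw [e1, Matrix.mulVec_sub, hScancel]
          abel
        have hval : muHat μ ((R.transpose).mulVec u - (a i + R.transpose.mulVec l))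
            = deltaHat B (u - (R.transpose)⁻¹.mulVec (a i)) *
              muHat μ ((u - (R.transpose)⁻¹.mulVec (a i)) - l) := by
          rw [Stmt19Aux.refinement R B τ hτ μ hself, harg]
          congr 1
          have hp := hper i l hl ((u - (R.transpose)⁻¹.mulVec (a i)) - l)
          rw [sub_add_cancel] at hp
          exact hp.symm
        rw [hval, nnnorm_mul]
        push_cast
        ring
      rw [tsum_congr h4, ENNReal.tsum_mul_left, hspec i (u - (R.transpose)⁻¹.mulVec (a i)),
        mul_one]
    rw [Finset.sum_congr rfl (fun i _ => h3 i)] at h2'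
    exact h2'
  have hreal : ∀ u : Fin n → ℝ,
      ∑ i, ‖deltaHat B (u - (R.transpose)⁻¹.mulVec (a i))‖ ^ 2 = 1 := by
    intro u
    have h1 := key u
    have h2 : ((∑ i, ‖deltaHat B (u - (R.transpose)⁻¹.mulVec (a i))‖₊ ^ 2 : NNReal) : ℝ≥0∞)
        = 1 := by
      rw [ENNReal.coe_finset_sum]
      simpa [ENNReal.coe_pow] using h1
    rw [ENNReal.coe_eq_one] at h2
    have h3 := congrArg NNReal.toReal h2
    push_cast at h3
    exact h3
  refine ⟨?_, hreal⟩
  have hNC : ((B.card : ℂ)) ≠ 0 := Nat.cast_ne_zero.mpr hN.ne'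
  have hz : ∀ z : ℂ, z * (starRingEnd ℂ) z = ((‖z‖ : ℝ) : ℂ)^2 := by
    intro z
    rw [Complex.mul_conj, Complex.normSq_eq_norm_sq, Complex.ofReal_pow]
  have hsum1 : ∀ u : Fin n → ℝ, ∑ i, ∑ b ∈ B, ∑ b' ∈ B,
      Stmt19Aux.ch (b - b') (-((R.transpose)⁻¹.mulVec (a i))) * Stmt19Aux.ch (b - b') u
      = ((B.card : ℂ))^2 := by
    intro u
    have e2 : ∀ i : Fin p, ∑ b ∈ B, ∑ b' ∈ B,
        Stmt19Aux.ch (b - b') (-((R.transpose)⁻¹.mulVec (a i))) * Stmt19Aux.ch (b - b') u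
        = ((B.card : ℂ))^2 * (deltaHat B (u - (R.transpose)⁻¹.mulVec (a i)) *
          (starRingEnd ℂ) (deltaHat B (u - (R.transpose)⁻¹.mulVec (a i)))) := by
      intro i
      rw [Stmt19Aux.deltaHat_mul_conj B hNC]
      refine Finset.sum_congr rfl fun b _ => Finset.sum_congr rfl fun b' _ => ?_
      rw [sub_eq_add_neg u, Stmt19Aux.ch_add, mul_comm]
    rw [Finset.sum_congr rfl fun i _ => e2 i, ← Finset.mul_sum]
    have e3 : ∑ i, (deltaHat B (u - (R.transpose)⁻¹.mulVec (a i)) *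
        (starRingEnd ℂ) (deltaHat B (u - (R.transpose)⁻¹.mulVec (a i)))) = 1 := by
      have h1 := hreal u
      have h4 : ∑ i, (deltaHat B (u - (R.transpose)⁻¹.mulVec (a i)) *
          (starRingEnd ℂ) (deltaHat B (u - (R.transpose)⁻¹.mulVec (a i))))
          = ((∑ i, ‖deltaHat B (u - (R.transpose)⁻¹.mulVec (a i))‖^2 : ℝ) : ℂ) := by
        push_cast
        exact Finset.sum_congr rfl fun i _ => hz _
      rw [h4, h1]
      norm_num
    rw [e3, mul_one]
  set V : Finset (Fin n → ℝ) := (B ×ˢ B).image (fun q => q.1 - q.2) with hV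
  set γ : (Fin n → ℝ) → ℂ := fun v =>
    ((((B ×ˢ B).filter (fun q => q.1 - q.2 = v)).card : ℂ) *
      (∑ i, Stmt19Aux.ch v (-((R.transpose)⁻¹.mulVec (a i)))))
      - (if v = 0 then ((B.card : ℂ))^2 else 0) with hγ
  have h0V : (0 : Fin n → ℝ) ∈ V := by
    refine Finset.mem_image.mpr ⟨(0, 0), ?_, by simp⟩
    simp [Finset.mem_product, h0B]
  have hcomb : ∀ u, ∑ v ∈ V, γ v * Stmt19Aux.ch v u = 0 := by
    intro u
    have e4 : ∑ v ∈ V, ((((B ×ˢ B).filter (fun q => q.1 - q.2 = v)).card : ℂ) *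
        (∑ i, Stmt19Aux.ch v (-((R.transpose)⁻¹.mulVec (a i))))) * Stmt19Aux.ch v u
        = ((B.card : ℂ))^2 := by
      have e5 : ∀ v ∈ V, ∑ q ∈ (B ×ˢ B).filter (fun q => q.1 - q.2 = v),
          (∑ i, Stmt19Aux.ch (q.1 - q.2) (-((R.transpose)⁻¹.mulVec (a i)))) *
            Stmt19Aux.ch (q.1 - q.2) u
          = ((((B ×ˢ B).filter (fun q => q.1 - q.2 = v)).card : ℂ) *
            ((∑ i, Stmt19Aux.ch v (-((R.transpose)⁻¹.mulVec (a i)))) *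
              Stmt19Aux.ch v u)) := by
        intro v _
        rw [Finset.sum_congr rfl (fun q hq => by
          rw [(Finset.mem_filter.mp hq).2])]
        rw [Finset.sum_const, nsmul_eq_mul]
      calc ∑ v ∈ V, ((((B ×ˢ B).filter (fun q => q.1 - q.2 = v)).card : ℂ) *
            (∑ i, Stmt19Aux.ch v (-((R.transpose)⁻¹.mulVec (a i))))) * Stmt19Aux.ch v u
          = ∑ v ∈ V, ∑ q ∈ (B ×ˢ B).filter (fun q => q.1 - q.2 = v),
            (∑ i, Stmt19Aux.ch (q.1 - q.2) (-((R.transpose)⁻¹.mulVec (a i)))) *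
              Stmt19Aux.ch (q.1 - q.2) u := by
            refine Finset.sum_congr rfl fun v hv => ?_
            rw [e5 v hv, mul_assoc]
        _ = ∑ q ∈ B ×ˢ B,
            (∑ i, Stmt19Aux.ch (q.1 - q.2) (-((R.transpose)⁻¹.mulVec (a i)))) *
              Stmt19Aux.ch (q.1 - q.2) u :=
            Finset.sum_fiberwise_of_maps_to (fun q hq => Finset.mem_image_of_mem _ hq) _
        _ = ∑ i, ∑ q ∈ B ×ˢ B,
            Stmt19Aux.ch (q.1 - q.2) (-((R.transpose)⁻¹.mulVec (a i))) *
              Stmt19Aux.ch (q.1 - q.2) u := by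
            rw [Finset.sum_comm]
            exact Finset.sum_congr rfl fun q _ => Finset.sum_mul _ _ _
        _ = ((B.card : ℂ))^2 := by
            rw [← hsum1 u]
            refine Finset.sum_congr rfl fun i _ => ?_
            rw [Finset.sum_product]
    have e6 : ∑ v ∈ V, (if v = 0 then ((B.card : ℂ))^2 else 0) * Stmt19Aux.ch v u
        = ((B.card : ℂ))^2 := by
      rw [Finset.sum_congr rfl (fun v _ => by rw [ite_mul, zero_mul])]
      rw [Finset.sum_ite_eq' V 0 (fun v => ((B.card : ℂ))^2 * Stmt19Aux.ch v u)]
      rw [if_pos h0V, Stmt19Aux.ch_zero_left, mul_one]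
    simp only [hγ, sub_mul]
    rw [Finset.sum_sub_distrib, e4, e6, sub_self]
  have hγ0 := Stmt19Aux.ch_comb_eq_zero hcomb 0 h0V
  have hfib : (B ×ˢ B).filter (fun q => q.1 - q.2 = (0 : Fin n → ℝ))
      = B.image (fun b => (b, b)) := by
    ext q
    simp only [Finset.mem_filter, Finset.mem_product, Finset.mem_image, sub_eq_zero]
    constructor
    · rintro ⟨⟨hq1, hq2⟩, h3⟩
      obtain ⟨x, y⟩ := q
      obtain rfl : x = y := h3
      exact ⟨x, hq1, rfl⟩
    · rintro ⟨b, hb, rfl⟩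
      exact ⟨⟨hb, hb⟩, rfl⟩
  have hcard : ((B ×ˢ B).filter (fun q => q.1 - q.2 = (0 : Fin n → ℝ))).card = B.card := by
    rw [hfib, Finset.card_image_of_injective _ (fun x y h => (Prod.ext_iff.mp h).1)]
  simp only [hγ, hcard, Stmt19Aux.ch_zero_left, Finset.sum_const, Finset.card_univ,
    Fintype.card_fin, nsmul_eq_mul, mul_one, if_pos] at hγ0
  have hfinal : (p : ℂ) = (B.card : ℂ) := by
    apply mul_left_cancel₀ hNC
    linear_combination hγ0
  exact_mod_cast hfinal
end
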